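/- arXiv:2209.06241 — 6 statements merged into one kernel-verified Lean document; each statement's English description precedes it below -/
import Mathlib

section
/- Let S ⊆ ℝⁿ be a bounded set such that 0 lies in the relative interior of the convex hull of S, and let f_S(x) = sup_{v∈S} ⟨x, v⟩ be the support function of S (under these hypotheses f_S ∈ CH⁺₁(ℝⁿ)). Then for every x ∈ ℝⁿ, 𝒟f_S(x) = inf{ α₁ + ⋯ + α_N : N ∈ ℕ, α₁, …, α_N ≥ 0, v₁, …, v_N ∈ S, and f_S(α₁v₁ + ⋯ + α_N v_N − x) = 0 }. -/
open Set
open scoped RealInnerProductSpace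

noncomputable section

abbrev Euc (n : ℕ) := EuclideanSpace ℝ (Fin n)

/-- `CHplus n p f` : `f` is convex, nonnegative, positively `p`-homogeneous and
its kernel is a linear subspace of `ℝⁿ`. -/
def CHplus (n : ℕ) (p : ℝ) (f : Euc n → ℝ) : Prop :=
  ConvexOn ℝ Set.univ f ∧ (∀ x, 0 ≤ f x) ∧
    (∀ t : ℝ, 0 < t → ∀ x, f (t • x) = t ^ p * f x) ∧
    ∃ K : Submodule ℝ (Euc n), (K : Set (Euc n)) = {x | f x = 0}

/-- The norm-like dual `𝒟f`. -/
def NormDual {n : ℕ} (f : Euc n → ℝ) : Euc n → ℝ := fun x =>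
  sSup {r : ℝ | ∃ y : Euc n, f y ≤ 1 ∧ (∀ z, f z = 0 → ⟪y, z⟫ = 0) ∧ r = ⟪y, x⟫}

/-- Subdifferential of a convex function. -/
def subdiff {n : ℕ} (f : Euc n → ℝ) (x : Euc n) : Set (Euc n) :=
  {v | ∀ y, ⟪v, y - x⟫ ≤ f y - f x}

/-- `(lam, x)` is an eigenpair of `(f, g)`, i.e. `0 ∈ ∂f(x) - lam ∂g(x)`. -/
def IsEigenpair {n : ℕ} (f g : Euc n → ℝ) (lam : ℝ) (x : Euc n) : Prop :=
  ∃ w ∈ subdiff g x, lam • w ∈ subdiff f x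

/-- `lam` is an eigenvalue of the pair `(f, g)`. -/
def IsEigenvalue {n : ℕ} (f g : Euc n → ℝ) (lam : ℝ) : Prop :=
  ∃ x : Euc n, x ≠ 0 ∧ IsEigenpair f g lam x

/-- The eigenspace `S_lam(f,g)`. -/
def eigSpace {n : ℕ} (f g : Euc n → ℝ) (lam : ℝ) : Set (Euc n) :=
  {x | IsEigenpair f g lam x}

/-- Krasnoselskii genus. -/
def genus {n : ℕ} (S : Set (Euc n)) : ℕ∞ :=
  sInf {k : ℕ∞ | ∃ m : ℕ, k = (m : ℕ∞) ∧
    ∃ φ : Euc n → Euc m, ContinuousOn φ S ∧ (∀ x ∈ S, φ x ≠ 0) ∧ ∀ x ∈ S, φ (-x) = -φ x}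

/-- Multiplicity of an eigenvalue. -/
def mult {n : ℕ} (f g : Euc n → ℝ) (lam : ℝ) : ℕ∞ := genus (eigSpace f g lam)

/-- `k`-th variational eigenvalue of the pair `(f,g)`. -/
def varEig {n : ℕ} (f g : Euc n → ℝ) (k : ℕ) : ℝ :=
  sInf {r : ℝ | ∃ S : Set (Euc n), (0 : Euc n) ∉ S ∧ IsClosed S ∧ (∀ x ∈ S, -x ∈ S) ∧
    (k : ℕ∞) ≤ genus S ∧ r = sSup ((fun x => f x / g x) '' S)}

/-- `cone(S)`. -/
def coneSet {n : ℕ} (S : Set (Euc n)) : Set (Euc n) :=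
  {u | ∃ t : ℝ, 0 < t ∧ ∃ v ∈ S, u = t • v}

/-- `ℳ_A f (x) = f (Aᵀ x)`. -/
def Mop {n m : ℕ} (A : Euc n →L[ℝ] Euc m) (f : Euc n → ℝ) : Euc m → ℝ :=
  fun x => f (ContinuousLinearMap.adjoint A x)

/-- `𝒫_A f (x) = inf { f y : A y = P_A x }` with `P_A` the orthogonal projection
onto the range of `A`. -/
def Pop {n m : ℕ} (A : Euc n →L[ℝ] Euc m) (f : Euc n → ℝ) : Euc m → ℝ :=
  fun x => sInf {r : ℝ | ∃ y : Euc n,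
    A y = (Submodule.orthogonalProjectionOnto (LinearMap.range (A : Euc n →ₗ[ℝ] Euc m)) x : Euc m) ∧ r = f y}

/-- Modified Legendre transform. -/
def Leg {n : ℕ} (f : Euc n → ℝ) : Euc n → ℝ := fun x =>
  sSup {r : ℝ | ∃ y : Euc n, (∀ z, f z = 0 → ⟪y, z⟫ = 0) ∧ r = ⟪x, y⟫ - f y}

/-- Modified polarity transform. -/
def Pol {n : ℕ} (f : Euc n → ℝ) : Euc n → ℝ := fun x =>
  sSup {r : ℝ | ∃ y : Euc n, (∀ z, f z = 0 → ⟪y, z⟫ = 0) ∧ 0 < f y ∧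
    r = (⟪x, y⟫ - 1) / f y}

/-- the norm-like dual of a support function. -/
theorem stmt_2 {n : ℕ} (S : Set (Euc n)) (hSb : Bornology.IsBounded S)
    (fS : Euc n → ℝ)
    (hfS : ∀ x, fS x = sSup {r : ℝ | ∃ v ∈ S, r = ⟪x, v⟫})
    (h0 : (0 : Euc n) ∈ intrinsicInterior ℝ (convexHull ℝ S)) :
    CHplus n 1 fS ∧
    ∀ x, NormDual fS x =
      sInf {r : ℝ | ∃ (N : ℕ) (α : Fin N → ℝ) (v : Fin N → Euc n),
        (∀ i, 0 ≤ α i) ∧ (∀ i, v i ∈ S) ∧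
        fS ((∑ i, α i • v i) - x) = 0 ∧ r = ∑ i, α i} := by
  classical
  have hSne : S.Nonempty := by
    rcases Set.eq_empty_or_nonempty S with h | h
    · rw [h] at h0; simp [intrinsicInterior_empty] at h0
    · exact h
  obtain ⟨C, hC⟩ : ∃ C, ∀ v ∈ S, ‖v‖ ≤ C := isBounded_iff_forall_norm_le.mp hSb
  have hbdd : ∀ x : Euc n, BddAbove {r : ℝ | ∃ v ∈ S, r = ⟪x, v⟫} := by
    intro x
    refine ⟨‖x‖ * C, ?_⟩
    rintro r ⟨v, hv, rfl⟩
    calc ⟪x, v⟫ ≤ ‖x‖ * ‖v‖ := real_inner_le_norm x v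
      _ ≤ ‖x‖ * C := mul_le_mul_of_nonneg_left (hC v hv) (norm_nonneg x)
  have hsetne : ∀ x : Euc n, {r : ℝ | ∃ v ∈ S, r = ⟪x, v⟫}.Nonempty := fun x =>
    ⟨_, hSne.choose, hSne.choose_spec, rfl⟩
  have hle : ∀ x : Euc n, ∀ v ∈ S, ⟪x, v⟫ ≤ fS x := by
    intro x v hv; rw [hfS]; exact le_csSup (hbdd x) ⟨v, hv, rfl⟩
  have hfs_le : ∀ (x : Euc n) (b : ℝ), (∀ v ∈ S, ⟪x, v⟫ ≤ b) → fS x ≤ b := by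
    intro x b hb; rw [hfS]
    exact csSup_le (hsetne x) (by rintro r ⟨v, hv, rfl⟩; exact hb v hv)
  have hhull : ∀ x : Euc n, ∀ w ∈ convexHull ℝ S, ⟪x, w⟫ ≤ fS x := by
    intro x w hw
    have hlin : IsLinearMap ℝ (fun w : Euc n => ⟪x, w⟫) :=
      ⟨fun a b => inner_add_right x a b, fun c a => real_inner_smul_right x a c⟩
    exact convexHull_min (fun v hv => hle x v hv) (convex_halfSpace_le hlin (fS x)) hw
  have h0hull : (0 : Euc n) ∈ convexHull ℝ S := intrinsicInterior_subset h0
  have hfge : ∀ x : Euc n, 0 ≤ fS x := by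
    intro x
    have := hhull x 0 h0hull
    simpa using this
  have hhom1 : ∀ (t : ℝ), 0 < t → ∀ x : Euc n, fS (t • x) ≤ t * fS x := by
    intro t ht x
    refine hfs_le _ _ (fun v hv => ?_)
    rw [real_inner_smul_left]
    exact mul_le_mul_of_nonneg_left (hle x v hv) ht.le
  have hhom : ∀ (t : ℝ), 0 < t → ∀ x : Euc n, fS (t • x) = t * fS x := by
    intro t ht x
    refine le_antisymm (hhom1 t ht x) ?_
    have h2 := hhom1 t⁻¹ (by positivity) (t • x)
    rw [smul_smul, inv_mul_cancel₀ ht.ne', one_smul] at h2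
    calc t * fS x ≤ t * (t⁻¹ * fS (t • x)) := mul_le_mul_of_nonneg_left h2 ht.le
      _ = fS (t • x) := by field_simp
  set V : Submodule ℝ (Euc n) := Submodule.span ℝ S with hVdef
  have h0aff : (0 : Euc n) ∈ affineSpan ℝ S := convexHull_subset_affineSpan S h0hull
  have haffV : ∀ w : Euc n, w ∈ V → w ∈ affineSpan ℝ S := by
    intro w hw
    have hsub : V ≤ vectorSpan ℝ S := by
      rw [hVdef, Submodule.span_le]
      intro v hv
      have h1 : v - 0 ∈ (affineSpan ℝ S).direction :=
        AffineSubspace.vsub_mem_direction (subset_affineSpan ℝ S hv) h0aff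
      rw [direction_affineSpan] at h1
      simpa using h1
    have hw' : w ∈ (affineSpan ℝ S).direction := by
      rw [direction_affineSpan]; exact hsub hw
    simpa using AffineSubspace.vadd_mem_of_mem_direction hw' h0aff
  have hball : ∃ ε : ℝ, 0 < ε ∧ ∀ w : Euc n, w ∈ V → ‖w‖ < ε → w ∈ convexHull ℝ S := by
    obtain ⟨y, hy, hy0⟩ := mem_intrinsicInterior.mp h0
    rw [mem_interior_iff_mem_nhds, Metric.mem_nhds_iff] at hy
    obtain ⟨ε, hε, hb⟩ := hy
    refine ⟨ε, hε, fun w hwV hwn => ?_⟩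
    have hw' : w ∈ affineSpan ℝ (convexHull ℝ S) := by
      rw [affineSpan_convexHull]; exact haffV w hwV
    have : (⟨w, hw'⟩ : affineSpan ℝ (convexHull ℝ S)) ∈ Metric.ball y ε := by
      rw [Metric.mem_ball, Subtype.dist_eq, hy0]
      simpa using hwn
    exact hb this
  obtain ⟨ε, hε, hεball⟩ := hball
  have hker : ∀ x : Euc n, fS x = 0 ↔ x ∈ Vᗮ := by
    intro x
    constructor
    · intro hx
      have hv0 : ∀ v ∈ S, ⟪x, v⟫ = 0 := by
        intro v hv
        have h1 : ⟪x, v⟫ ≤ 0 := hx ▸ hle x v hv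
        set t : ℝ := ε / (2 * (‖v‖ + 1)) with htdef
        have htpos : 0 < t := by positivity
        have hmem : -(t • v) ∈ convexHull ℝ S := by
          refine hεball _ (Submodule.neg_mem _ (Submodule.smul_mem _ _
            (Submodule.subset_span hv))) ?_
          rw [norm_neg, norm_smul, Real.norm_eq_abs, abs_of_pos htpos]
          calc t * ‖v‖ < t * (2 * (‖v‖ + 1)) := by
                refine mul_lt_mul_of_pos_left ?_ htpos
                nlinarith [norm_nonneg v]
            _ = ε := by rw [htdef]; field_simp
        have h2 : ⟪x, -(t • v)⟫ ≤ 0 := hx ▸ hhull x _ hmem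
        rw [inner_neg_right, real_inner_smul_right] at h2
        nlinarith
      have hVle : ∀ u ∈ V, ⟪x, u⟫ = 0 := by
        intro u hu
        have hsub : V ≤ LinearMap.ker (innerSL ℝ x : Euc n →ₗ[ℝ] ℝ) := by
          rw [hVdef, Submodule.span_le]
          intro v hv
          simpa [LinearMap.mem_ker] using hv0 v hv
        simpa [LinearMap.mem_ker] using hsub hu
      exact (Submodule.mem_orthogonal' V x).mpr hVle
    · intro hx
      refine le_antisymm (hfs_le x 0 (fun v hv => ?_)) (hfge x)
      have h1 : ⟪v, x⟫ = 0 := (Submodule.mem_orthogonal V x).mp hx v (Submodule.subset_span hv)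
      rw [real_inner_comm] at h1
      exact h1.le
  have hconv : ConvexOn ℝ Set.univ fS := by
    refine ⟨convex_univ, fun x _ y _ a b ha hb hab => ?_⟩
    refine hfs_le _ _ (fun v hv => ?_)
    rw [inner_add_left, real_inner_smul_left, real_inner_smul_left]
    exact add_le_add (mul_le_mul_of_nonneg_left (hle x v hv) ha)
      (mul_le_mul_of_nonneg_left (hle y v hv) hb)
  have hCH : CHplus n 1 fS := by
    refine ⟨hconv, hfge, fun t ht x => by rw [Real.rpow_one]; exact hhom t ht x, ⟨Vᗮ, ?_⟩⟩
    ext x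
    simp only [SetLike.mem_coe, Set.mem_setOf_eq]
    exact (hker x).symm
  refine ⟨hCH, fun x => ?_⟩
  have hmemV : ∀ y : Euc n, (∀ z, fS z = 0 → ⟪y, z⟫ = 0) ↔ y ∈ V := by
    intro y
    constructor
    · intro h
      rw [← Submodule.orthogonal_orthogonal V]
      exact (Submodule.mem_orthogonal' Vᗮ y).mpr (fun u hu => h u ((hker u).mpr hu))
    · intro hy z hz
      have hz' : z ∈ Vᗮ := (hker z).mp hz
      exact (Submodule.mem_orthogonal V z).mp hz' y hy
  set A : Set ℝ := {r : ℝ | ∃ y : Euc n, fS y ≤ 1 ∧ (∀ z, fS z = 0 → ⟪y, z⟫ = 0) ∧ r = ⟪y, x⟫}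
    with hAdef
  set B : Set ℝ := {r : ℝ | ∃ (N : ℕ) (α : Fin N → ℝ) (v : Fin N → Euc n),
      (∀ i, 0 ≤ α i) ∧ (∀ i, v i ∈ S) ∧
      fS ((∑ i, α i • v i) - x) = 0 ∧ r = ∑ i, α i} with hBdef
  show sSup A = sInf B
  have hfS0 : fS (0 : Euc n) = 0 :=
    le_antisymm (hfs_le 0 0 (fun v hv => by simp)) (hfge 0)
  have h0A : (0 : ℝ) ∈ A := ⟨0, by rw [hfS0]; norm_num, fun z _ => by simp, by simp⟩
  have hAne : A.Nonempty := ⟨0, h0A⟩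
  have hhullV : convexHull ℝ S ⊆ (V : Set (Euc n)) :=
    convexHull_min (fun v hv => Submodule.subset_span hv) V.convex
  have hAbdd : BddAbove A := by
    refine ⟨2 * ‖x‖ / ε, ?_⟩
    rintro r ⟨y, hy1, hyK, rfl⟩
    have hyV : y ∈ V := (hmemV y).mp hyK
    have hynorm : ‖y‖ ≤ 2 / ε := by
      rcases eq_or_ne y 0 with h | h
      · rw [h]; simp; positivity
      · have hn : 0 < ‖y‖ := norm_pos_iff.mpr h
        have hw : ((ε / 2) * ‖y‖⁻¹) • y ∈ convexHull ℝ S := by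
          refine hεball _ (Submodule.smul_mem _ _ hyV) ?_
          rw [norm_smul, Real.norm_eq_abs, abs_of_pos (by positivity)]
          rw [mul_assoc, inv_mul_cancel₀ hn.ne', mul_one]
          linarith
        have h3 := hhull y _ hw
        rw [real_inner_smul_right, real_inner_self_eq_norm_sq] at h3
        have h2 : (ε / 2) * ‖y‖⁻¹ * (‖y‖ ^ 2) = (ε / 2) * ‖y‖ := by
          field_simp
        rw [h2] at h3
        have h4 := h3.trans hy1
        rw [le_div_iff₀ hε]
        nlinarith
    calc ⟪y, x⟫ ≤ ‖y‖ * ‖x‖ := real_inner_le_norm y x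
      _ ≤ (2 / ε) * ‖x‖ := mul_le_mul_of_nonneg_right hynorm (norm_nonneg x)
      _ = 2 * ‖x‖ / ε := by ring
  have hrep : ∀ w ∈ convexHull ℝ S, ∃ (N : ℕ) (α : Fin N → ℝ) (v : Fin N → Euc n),
      (∀ i, 0 ≤ α i) ∧ (∀ i, v i ∈ S) ∧ (∑ i, α i • v i) = w ∧ (∑ i, α i) = 1 := by
    intro w hw
    rw [convexHull_eq] at hw
    obtain ⟨ι, t, wt, z, hw0, hw1, hz, hcm⟩ := hw
    rw [Finset.centerMass_eq_of_sum_1 _ _ hw1] at hcm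
    set N := t.card with hN
    have e : Fin N ≃ {i // i ∈ t} := t.equivFin.symm
    refine ⟨N, fun i => wt (e i), fun i => z (e i), fun i => hw0 _ (e i).2,
      fun i => hz _ (e i).2, ?_, ?_⟩
    · rw [← hcm, ← Finset.sum_attach t (fun i => wt i • z i)]
      exact Fintype.sum_equiv e _ _ (fun i => rfl)
    · rw [← hw1, ← Finset.sum_attach t wt]
      exact Fintype.sum_equiv e _ _ (fun i => rfl)
  obtain ⟨px, hpxV, hxpx⟩ : ∃ px : Euc n, px ∈ V ∧ x - px ∈ Vᗮ :=
    ⟨(Submodule.orthogonalProjectionOnto V x : Euc n), (Submodule.orthogonalProjectionOnto V x).2,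
      Submodule.sub_starProjection_mem_orthogonal (K := V) x⟩
  have hpxx : fS (px - x) = 0 := by
    rw [hker]
    have := Vᗮ.neg_mem hxpx
    simpa using this
  have hBcone : ∀ c : ℝ, 0 < c → c⁻¹ • px ∈ convexHull ℝ S → c ∈ B := by
    intro c hc hmem
    obtain ⟨N, α, v, hα, hv, hsum, h1⟩ := hrep _ hmem
    refine ⟨N, fun i => c * α i, v, fun i => mul_nonneg hc.le (hα i),
      hv, ?_, by rw [← Finset.mul_sum, h1, mul_one]⟩
    have h2 : (∑ i, (c * α i) • v i) = c • (∑ i, α i • v i) := by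
      rw [Finset.smul_sum]
      exact Finset.sum_congr rfl (fun i _ => by rw [smul_smul])
    rw [h2, hsum, smul_smul, mul_inv_cancel₀ hc.ne', one_smul]
    exact hpxx
  have hBne : B.Nonempty := by
    rcases eq_or_ne px 0 with h | h
    · refine ⟨0, 0, fun _ => 0, fun _ => hSne.choose, fun i => le_refl 0,
        fun i => hSne.choose_spec, ?_, by simp⟩
      simp only [Finset.univ_eq_empty, Finset.sum_empty, zero_sub]
      rw [hker]
      have hx' : x ∈ Vᗮ := by
        have := hxpx; rw [h, sub_zero] at this; exact this
      exact Vᗮ.neg_mem hx'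
    · have hn : 0 < ‖px‖ := norm_pos_iff.mpr h
      set c : ℝ := 2 * ‖px‖ / ε with hcdef
      have hc : 0 < c := by positivity
      refine ⟨c, hBcone c hc ?_⟩
      refine hεball _ (Submodule.smul_mem _ _ hpxV) ?_
      rw [norm_smul, Real.norm_eq_abs, abs_of_pos (by positivity), hcdef]
      rw [show (2 * ‖px‖ / ε)⁻¹ = ε / (2 * ‖px‖) by rw [inv_div]]
      rw [div_mul_eq_mul_div, div_lt_iff₀ (by positivity)]
      nlinarith
  have hBlb : ∀ r ∈ B, (0 : ℝ) ≤ r := by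
    rintro r ⟨N, α, v, hα, hv, hf0, rfl⟩
    exact Finset.sum_nonneg (fun i _ => hα i)
  have hBbdd : BddBelow B := ⟨0, hBlb⟩
  have hAB : ∀ a ∈ A, ∀ b ∈ B, a ≤ b := by
    rintro a ⟨y, hy1, hyK, rfl⟩ b ⟨N, α, v, hα, hv, hf0, rfl⟩
    have hyV : y ∈ V := (hmemV y).mp hyK
    set w : Euc n := ∑ i, α i • v i with hwdef
    have hwx : w - x ∈ Vᗮ := (hker _).mp hf0
    have h1 : ⟪y, w - x⟫ = 0 := (Submodule.mem_orthogonal V (w - x)).mp hwx y hyV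
    have h2 : ⟪y, x⟫ = ⟪y, w⟫ := by
      rw [inner_sub_right] at h1
      linarith
    rw [h2, hwdef, inner_sum]
    refine Finset.sum_le_sum (fun i _ => ?_)
    rw [real_inner_smul_right]
    calc α i * ⟪y, v i⟫ ≤ α i * 1 :=
        mul_le_mul_of_nonneg_left ((hle y (v i) (hv i)).trans hy1) (hα i)
      _ = α i := mul_one _
  have hd1 : sSup A ≤ sInf B :=
    le_csInf hBne (fun b hb => csSup_le hAne (fun a ha => hAB a ha b hb))
  have hseg : ∀ w ∈ closure (convexHull ℝ S), ∀ t : ℝ, 0 ≤ t → t < 1 →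
      t • w ∈ convexHull ℝ S := by
    intro w hw t ht0 ht1
    rcases eq_or_lt_of_le ht0 with h | h
    · rw [← h, zero_smul]; exact h0hull
    · set δ : ℝ := (1 - t) * ε / (2 * t) with hδdef
      have h1t : 0 < 1 - t := by linarith
      have hδ : 0 < δ := by positivity
      obtain ⟨v, hvmem, hvd⟩ := Metric.mem_closure_iff.mp hw δ hδ
      have hwV : w ∈ (V : Set (Euc n)) := by
        have hclV : closure (convexHull ℝ S) ⊆ (V : Set (Euc n)) := by
          rw [← IsClosed.closure_eq (V.closed_of_finiteDimensional)]
          exact closure_mono hhullV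
        exact hclV hw
      have hvV : v ∈ (V : Set (Euc n)) := hhullV hvmem
      set u : Euc n := ((1 - t)⁻¹ * t) • (w - v) with hudef
      have huV : u ∈ V := Submodule.smul_mem _ _ (Submodule.sub_mem _ hwV hvV)
      have hunorm : ‖u‖ < ε := by
        rw [hudef, norm_smul, Real.norm_eq_abs, abs_of_pos (by positivity)]
        have hd : ‖w - v‖ < δ := by
          rw [dist_eq_norm] at hvd; exact hvd
        calc (1 - t)⁻¹ * t * ‖w - v‖ < (1 - t)⁻¹ * t * δ :=
              mul_lt_mul_of_pos_left hd (by positivity)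
          _ = ε / 2 := by rw [hδdef]; field_simp
          _ < ε := by linarith
      have huhull : u ∈ convexHull ℝ S := hεball u huV hunorm
      have hcomb : t • w = t • v + (1 - t) • u := by
        rw [hudef, smul_smul]
        have h3 : (1 - t) * ((1 - t)⁻¹ * t) = t := by field_simp
        rw [h3, smul_sub]
        abel
      rw [hcomb]
      exact (convex_convexHull ℝ S) hvmem huhull ht0 (by linarith) (by ring)
  have hd2 : sInf B ≤ sSup A := by
    by_contra hcon
    push_neg at hcon
    set β := sInf B with hβ
    have hA0 : (0 : ℝ) ≤ sSup A := le_csSup hAbdd h0A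
    set c : ℝ := (sSup A + β) / 2 with hcdef
    set c' : ℝ := (c + β) / 2 with hc'def
    have hc : sSup A < c := by rw [hcdef]; linarith
    have hcc' : c < c' := by rw [hc'def]; linarith
    have hc'β : c' < β := by rw [hc'def]; linarith
    have hcpos : 0 < c := by rw [hcdef]; linarith
    have hc'pos : 0 < c' := by linarith
    have hnotin : c⁻¹ • px ∉ closure (convexHull ℝ S) := by
      intro hmem
      have ht : (0:ℝ) ≤ c / c' := by positivity
      have ht1 : c / c' < 1 := (div_lt_one hc'pos).mpr hcc'
      have h1 := hseg _ hmem (c / c') ht ht1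
      rw [smul_smul] at h1
      have h2 : c / c' * c⁻¹ = c'⁻¹ := by
        rw [div_eq_mul_inv, mul_right_comm, mul_inv_cancel₀ hcpos.ne', one_mul]
      rw [h2] at h1
      have h3 : c' ∈ B := hBcone c' hc'pos h1
      have := csInf_le hBbdd h3
      linarith
    obtain ⟨f, u, hfu, hux⟩ := geometric_hahn_banach_closed_point
      ((convex_convexHull ℝ S).closure) isClosed_closure hnotin
    obtain ⟨y, hyf⟩ : ∃ y : Euc n, ∀ w : Euc n, ⟪y, w⟫ = f w :=
      ⟨(InnerProductSpace.toDual ℝ (Euc n)).symm f,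
        fun w => InnerProductSpace.toDual_symm_apply⟩
    have h0u : 0 < u := by
      have := hfu 0 (subset_closure h0hull)
      rwa [map_zero] at this
    have hfSyu : fS y ≤ u := by
      refine hfs_le _ _ (fun v hv => ?_)
      rw [hyf]
      exact (hfu v (subset_closure (subset_convexHull ℝ S hv))).le
    have hypx : u * c < ⟪y, px⟫ := by
      have h5 := hux
      rw [← hyf, real_inner_smul_right] at h5
      calc u * c < c⁻¹ * ⟪y, px⟫ * c := mul_lt_mul_of_pos_right h5 hcpos
        _ = ⟪y, px⟫ := by rw [mul_comm, ← mul_assoc, mul_inv_cancel₀ hcpos.ne', one_mul]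
    have hfSypos : 0 < fS y := by
      rcases lt_or_eq_of_le (hfge y) with h | h
      · exact h
      · exfalso
        have hy0 : y ∈ Vᗮ := (hker y).mp h.symm
        have h6 : ⟪y, px⟫ = 0 := (Submodule.mem_orthogonal' V y).mp hy0 px hpxV
        nlinarith
    obtain ⟨y0, hy0V, hyy0'⟩ : ∃ y0 : Euc n, y0 ∈ V ∧ y - y0 ∈ Vᗮ :=
      ⟨(Submodule.orthogonalProjectionOnto V y : Euc n), (Submodule.orthogonalProjectionOnto V y).2,
        Submodule.sub_starProjection_mem_orthogonal (K := V) y⟩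
    have hyy0 : ∀ w : Euc n, w ∈ V → ⟪y0, w⟫ = ⟪y, w⟫ := by
      intro w hw
      have h2 := (Submodule.mem_orthogonal V (y - y0)).mp hyy0' w hw
      rw [inner_sub_right] at h2
      have h3 := real_inner_comm w y
      have h4 := real_inner_comm w y0
      linarith
    have hfSy0 : fS y0 = fS y := by
      rw [hfS, hfS]
      congr 1
      ext r
      constructor
      · rintro ⟨v, hv, rfl⟩
        exact ⟨v, hv, hyy0 v (Submodule.subset_span hv)⟩
      · rintro ⟨v, hv, rfl⟩
        exact ⟨v, hv, (hyy0 v (Submodule.subset_span hv)).symm⟩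
    have hy'A : (fS y)⁻¹ * ⟪y0, x⟫ ∈ A := by
      refine ⟨(fS y)⁻¹ • y0, ?_, (hmemV _).mpr (Submodule.smul_mem _ _ hy0V),
        (real_inner_smul_left _ _ _).symm⟩
      rw [hhom _ (by positivity) y0, hfSy0, inv_mul_cancel₀ hfSypos.ne']
    have h1 : ⟪y0, x⟫ = ⟪y, px⟫ := by
      have h2 := (Submodule.mem_orthogonal V (x - px)).mp hxpx y0 hy0V
      rw [inner_sub_right] at h2
      have h3 := hyy0 px hpxV
      linarith
    have hy'x : c < (fS y)⁻¹ * ⟪y0, x⟫ := by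
      rw [h1]
      have h8 : fS y * c < ⟪y, px⟫ :=
        lt_of_le_of_lt (mul_le_mul_of_nonneg_right hfSyu hcpos.le) hypx
      have h9 : (fS y)⁻¹ * (fS y * c) < (fS y)⁻¹ * ⟪y, px⟫ :=
        mul_lt_mul_of_pos_left h8 (inv_pos.mpr hfSypos)
      rwa [← mul_assoc, inv_mul_cancel₀ hfSypos.ne', one_mul] at h9
    have hfin := le_csSup hAbdd hy'A
    exact absurd (hc.trans (hy'x.trans_le hfin)) (lt_irrefl _)
  exact le_antisymm hd1 hd2

end
end

section
/- Let f ∈ CH⁺₁(ℝⁿ) and let A : ℝⁿ → ℝᵐ be a linear map with Ker(f) ⊆ Ker(A). Then 𝒫_A f = 𝒟(ℳ_A(𝒟f)). In particular, if f(x) > 0 for every x ≠ 0, then 𝒫_A f = 𝒟(ℳ_A(𝒟f)) for every linear map A : ℝⁿ → ℝᵐ. -/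
open Set
open scoped RealInnerProductSpace

noncomputable section

lemma aux_le_of_mul (a b : ℝ) (hb : 0 < b) (h : ∀ t : ℝ, 0 < t → t < 1 → a * t ≤ b) : a ≤ b := by
  by_contra hab
  push_neg at hab
  have ha : 0 < a := hb.trans hab
  have h1 : b / a < 1 := (div_lt_one ha).2 hab
  have h2 : 0 < b / a := div_pos hb ha
  set t := (b / a + 1) / 2 with ht
  have h3 : 0 < t := by positivity
  have h4 : t < 1 := by rw [ht]; linarith
  have h5 : b / a < t := by rw [ht]; linarith
  have h6 := h t h3 h4
  have h7 : b < a * t := by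
    calc b = a * (b / a) := by field_simp
    _ < a * t := by exact (mul_lt_mul_iff_right₀ ha).2 h5
  linarith

set_option maxHeartbeats 2000000 in
lemma master {n m : ℕ} (f : Euc n → ℝ) (hf : CHplus n 1 f)
    (A : Euc n →L[ℝ] Euc m) (hKA : ∀ x, f x = 0 → A x = 0) :
    Pop A f = NormDual (Mop A (NormDual f)) := by
  obtain ⟨hconv, hpos, hhom', ⟨K, hK⟩⟩ := hf
  have hhom : ∀ t : ℝ, 0 < t → ∀ x, f (t • x) = t * f x := by
    intro t ht x
    have := hhom' t ht x
    rwa [Real.rpow_one] at this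
  have hmemK : ∀ x, x ∈ K ↔ f x = 0 := by
    intro x
    constructor
    · intro hx; have h : x ∈ (K : Set (Euc n)) := hx; rwa [hK] at h
    · intro hx; show x ∈ (K : Set (Euc n)); rw [hK]; exact hx
  have hf0 : f 0 = 0 := (hmemK 0).1 K.zero_mem
  have hsub : ∀ x y, f (x + y) ≤ f x + f y := by
    intro x y
    have h2 := hconv.2 (mem_univ x) (mem_univ y) (le_of_lt one_half_pos) (le_of_lt one_half_pos)
      (by norm_num)
    have h3 := hhom 2 (by norm_num) ((1/2 : ℝ) • x + (1/2 : ℝ) • y)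
    have h4 : (2:ℝ) • ((1/2 : ℝ) • x + (1/2 : ℝ) • y) = x + y := by module
    simp only [smul_eq_mul] at h2
    rw [h4] at h3
    rw [h3]; linarith
  have finv : ∀ x k, f k = 0 → f (x + k) = f x := by
    intro x k hk
    have hk' : f (-k) = 0 := (hmemK (-k)).1 (K.neg_mem ((hmemK k).2 hk))
    apply le_antisymm
    · have := hsub x k; rw [hk] at this; linarith
    · have := hsub (x + k) (-k); rw [hk'] at this
      simp only [add_neg_cancel_right] at this; linarith
  have fcont : Continuous f := by
    have h := hconv.continuousOn_interior
    rw [interior_univ] at h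
    exact continuousOn_univ.1 h
  have hb : ∃ c : ℝ, 0 < c ∧ ∀ y : Euc n, y ∈ Kᗮ → ‖y‖ ≤ c * f y := by
    by_cases hS : (Metric.sphere (0 : Euc n) 1 ∩ (Kᗮ : Set (Euc n))).Nonempty
    · have hcpt : IsCompact (Metric.sphere (0 : Euc n) 1 ∩ (Kᗮ : Set (Euc n))) :=
        (isCompact_sphere 0 1).inter_right (Kᗮ).closed_of_finiteDimensional
      obtain ⟨y₀, hy₀S, hmin⟩ := hcpt.exists_isMinOn hS fcont.continuousOn
      have hy₀n : ‖y₀‖ = 1 := by simpa using hy₀S.1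
      have hy₀K : 0 < f y₀ := by
        rcases (hpos y₀).lt_or_eq with h | h
        · exact h
        · exfalso
          have h0 : y₀ ∈ K := (hmemK y₀).2 h.symm
          have : y₀ = 0 := (Submodule.orthogonal_disjoint K).le_bot ⟨h0, hy₀S.2⟩
          rw [this] at hy₀n; simp at hy₀n
      refine ⟨(f y₀)⁻¹, inv_pos.2 hy₀K, ?_⟩
      intro y hy
      rcases eq_or_ne y 0 with rfl | hyne
      · simp [hf0]
      · have hn : 0 < ‖y‖ := norm_pos_iff.2 hyne
        have hyu : (‖y‖⁻¹ • y) ∈ Metric.sphere (0 : Euc n) 1 ∩ (Kᗮ : Set (Euc n)) := by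
          constructor
          · simp [norm_smul, abs_of_pos (inv_pos.2 hn), inv_mul_cancel₀ hn.ne']
          · exact Submodule.smul_mem _ _ hy
        have hmin' : f y₀ ≤ f (‖y‖⁻¹ • y) := isMinOn_iff.mp hmin _ hyu
        have hfy : f y = ‖y‖ * f (‖y‖⁻¹ • y) := by
          have h := hhom ‖y‖ hn (‖y‖⁻¹ • y)
          rw [smul_smul, mul_inv_cancel₀ hn.ne', one_smul] at h
          exact h
        calc ‖y‖ = (f y₀)⁻¹ * (‖y‖ * f y₀) := by field_simp
        _ ≤ (f y₀)⁻¹ * (‖y‖ * f (‖y‖⁻¹ • y)) := by gcongr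
        _ = (f y₀)⁻¹ * f y := by rw [← hfy]
    · refine ⟨1, one_pos, ?_⟩
      intro y hy
      rcases eq_or_ne y 0 with rfl | hyne
      · simp [hf0]
      · exfalso
        have hn : 0 < ‖y‖ := norm_pos_iff.2 hyne
        exact hS ⟨‖y‖⁻¹ • y, by simp [norm_smul, abs_of_pos (inv_pos.2 hn), inv_mul_cancel₀ hn.ne'],
          Submodule.smul_mem _ _ hy⟩
  obtain ⟨c, hc, hbd⟩ := hb
  -- basic NormDual facts
  set Tset : Euc n → Set ℝ :=
    fun u => {r : ℝ | ∃ y : Euc n, f y ≤ 1 ∧ (∀ z, f z = 0 → ⟪y, z⟫ = 0) ∧ r = ⟪y, u⟫} with hTset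
  have hTdef : ∀ u, NormDual f u = sSup (Tset u) := fun u => rfl
  have horthmem : ∀ y : Euc n, (∀ z, f z = 0 → ⟪y, z⟫ = 0) → y ∈ Kᗮ := by
    intro y hy
    rw [Submodule.mem_orthogonal]
    intro u hu
    rw [real_inner_comm]
    exact hy u ((hmemK u).1 hu)
  have hT0 : ∀ u, (0:ℝ) ∈ Tset u := by
    intro u
    exact ⟨0, by rw [hf0]; norm_num, fun z _ => inner_zero_left z, (inner_zero_left u).symm⟩
  have hTbdd : ∀ u, BddAbove (Tset u) := by
    intro u
    refine ⟨c * ‖u‖, ?_⟩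
    rintro r ⟨y, hy1, hy2, rfl⟩
    have h1 : ‖y‖ ≤ c := by
      have := hbd y (horthmem y hy2)
      nlinarith
    calc ⟪y, u⟫ ≤ ‖y‖ * ‖u‖ := real_inner_le_norm y u
    _ ≤ c * ‖u‖ := by gcongr
  have hgnn : ∀ u, 0 ≤ NormDual f u := fun u => le_csSup (hTbdd u) (hT0 u)
  have hginv : ∀ u k, f k = 0 → NormDual f (u + k) = NormDual f u := by
    intro u k hk
    rw [hTdef, hTdef]
    congr 1
    ext r
    constructor
    · rintro ⟨y, h1, h2, rfl⟩
      exact ⟨y, h1, h2, by rw [inner_add_right, h2 k hk, add_zero]⟩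
    · rintro ⟨y, h1, h2, rfl⟩
      exact ⟨y, h1, h2, by rw [inner_add_right, h2 k hk, add_zero]⟩
  have hker : ∀ u, NormDual f u = 0 ↔ f u = 0 := by
    intro u
    constructor
    · intro h
      by_contra hfu
      set w := u - (Submodule.orthogonalProjectionOnto K u : Euc n) with hwdef
      have hwK : w ∈ Kᗮ := Submodule.sub_starProjection_mem_orthogonal u
      have hwne : w ≠ 0 := by
        intro h0
        apply hfu
        have h4 : u = (Submodule.orthogonalProjectionOnto K u : Euc n) := by
          rw [hwdef] at h0; rwa [sub_eq_zero] at h0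
        rw [h4]
        exact (hmemK _).1 (SetLike.coe_mem _)
      have hfw : 0 < f w := by
        rcases (hpos w).lt_or_eq with h1 | h1
        · exact h1
        · exact absurd ((Submodule.orthogonal_disjoint K).le_bot
            ⟨(hmemK w).2 h1.symm, hwK⟩) hwne
      have hmem : ((f w)⁻¹ * ⟪w, u⟫) ∈ Tset u := by
        refine ⟨(f w)⁻¹ • w, ?_, ?_, ?_⟩
        · rw [hhom _ (inv_pos.2 hfw), inv_mul_cancel₀ hfw.ne']
        · intro z hz
          rw [real_inner_smul_left,
            Submodule.inner_left_of_mem_orthogonal ((hmemK z).2 hz) hwK, mul_zero]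
        · rw [real_inner_smul_left]
      have key : ⟪w, u⟫ = ‖w‖ ^ 2 := by
        have h5 : u = w + (Submodule.orthogonalProjectionOnto K u : Euc n) := by
          rw [hwdef]; abel
        have h6 : ⟪w, (Submodule.orthogonalProjectionOnto K u : Euc n)⟫ = 0 :=
          Submodule.inner_left_of_mem_orthogonal (SetLike.coe_mem _) hwK
        rw [h5, inner_add_right, h6, add_zero, real_inner_self_eq_norm_sq]
      have hle := le_csSup (hTbdd u) hmem
      rw [← hTdef, h, key] at hle
      have hpw : 0 < (f w)⁻¹ * ‖w‖ ^ 2 :=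
        mul_pos (inv_pos.2 hfw) (pow_pos (norm_pos_iff.2 hwne) 2)
      linarith
    · intro hfu
      apply le_antisymm _ (hgnn u)
      rw [hTdef]
      apply csSup_le ⟨0, hT0 u⟩
      rintro r ⟨y, h1, h2, rfl⟩
      exact le_of_eq (h2 u hfu)
  have hkey : ∀ (u y : Euc n), (∀ z, f z = 0 → ⟪u, z⟫ = 0) → NormDual f u ≤ 1 → ⟪u, y⟫ ≤ f y := by
    intro u y hu hg1
    set k : Euc n := (Submodule.orthogonalProjectionOnto K y : Euc n) with hkdef
    set w := y - k with hwdef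
    have hwK : w ∈ Kᗮ := Submodule.sub_starProjection_mem_orthogonal y
    have hfk : f k = 0 := (hmemK k).1 (SetLike.coe_mem _)
    have hywk : y = w + k := by rw [hwdef]; abel
    have hfwy : f y = f w := by
      conv_lhs => rw [hywk]
      exact finv w k hfk
    have huy : ⟪u, y⟫ = ⟪u, w⟫ := by
      conv_lhs => rw [hywk]
      rw [inner_add_right, hu k hfk, add_zero]
    by_cases hfw : f w = 0
    · have hw0 : w = 0 := (Submodule.orthogonal_disjoint K).le_bot ⟨(hmemK w).2 hfw, hwK⟩
      rw [huy, hw0, inner_zero_right]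
      exact hpos y
    · have hfw' : 0 < f w := (hpos w).lt_of_ne (Ne.symm hfw)
      have hmem : ((f w)⁻¹ * ⟪w, u⟫) ∈ Tset u := by
        refine ⟨(f w)⁻¹ • w, ?_, ?_, ?_⟩
        · rw [hhom _ (inv_pos.2 hfw'), inv_mul_cancel₀ hfw'.ne']
        · intro z hz
          rw [real_inner_smul_left,
            Submodule.inner_left_of_mem_orthogonal ((hmemK z).2 hz) hwK, mul_zero]
        · rw [real_inner_smul_left]
      have hle := le_csSup (hTbdd u) hmem
      rw [← hTdef] at hle
      have hle2 : (f w)⁻¹ * ⟪w, u⟫ ≤ 1 := hle.trans hg1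
      have hle3 := mul_le_mul_of_nonneg_left hle2 hfw'.le
      rw [← mul_assoc, mul_inv_cancel₀ hfw'.ne', one_mul, mul_one] at hle3
      rw [huy, real_inner_comm, hfwy]
      exact hle3
  -- main proof
  funext x
  set A' := ContinuousLinearMap.adjoint A with hA'
  set R := LinearMap.range (A : Euc n →ₗ[ℝ] Euc m) with hRdef
  set px : Euc m := (Submodule.orthogonalProjectionOnto R x : Euc m) with hpx
  obtain ⟨y₁, hy₁⟩ : ∃ y, A y = px := by
    have : px ∈ R := SetLike.coe_mem _
    exact this
  set y₀ := y₁ - (Submodule.orthogonalProjectionOnto K y₁ : Euc n) with hy₀def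
  have hy₀K : y₀ ∈ Kᗮ := Submodule.sub_starProjection_mem_orthogonal y₁
  have hAy₀ : A y₀ = px := by
    have h1 : A ((Submodule.orthogonalProjectionOnto K y₁ : Euc n)) = 0 :=
      hKA _ ((hmemK _).1 (SetLike.coe_mem _))
    rw [hy₀def, map_sub, h1, sub_zero, hy₁]
  set Sset : Set ℝ := {r : ℝ | ∃ y : Euc n, A y = px ∧ r = f y} with hSset
  set hh := Mop A (NormDual f) with hhdef
  set Dset : Set ℝ := {r : ℝ | ∃ v : Euc m, hh v ≤ 1 ∧ (∀ z, hh z = 0 → ⟪v, z⟫ = 0) ∧ r = ⟪v, x⟫}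
    with hDset
  have goaleq : Pop A f x = sInf Sset ∧ NormDual (Mop A (NormDual f)) x = sSup Dset := by
    constructor
    · rfl
    · rfl
  have hhval : ∀ v, hh v = NormDual f (A' v) := fun v => rfl
  have hxpx : A' (x - px) = 0 := by
    have h1 : ∀ u : Euc n, ⟪A' (x - px), u⟫ = 0 := by
      intro u
      rw [hA', ContinuousLinearMap.adjoint_inner_left]
      have hmem : x - px ∈ Rᗮ := Submodule.sub_starProjection_mem_orthogonal x
      rw [real_inner_comm]
      exact Submodule.inner_right_of_mem_orthogonal (LinearMap.mem_range_self (A : Euc n →ₗ[ℝ] Euc m) u) hmem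
    exact inner_self_eq_zero.1 (h1 (A' (x - px)))
  have hhxpx : hh (x - px) = 0 := by
    rw [hhval, hxpx]
    exact (hker 0).2 hf0
  have claim1 : ∀ r ∈ Dset, ∀ s ∈ Sset, r ≤ s := by
    rintro r ⟨v, hv1, hv2, rfl⟩ s ⟨y, hy, rfl⟩
    have hu : ∀ z, f z = 0 → ⟪A' v, z⟫ = 0 := by
      intro z hz
      rw [hA', ContinuousLinearMap.adjoint_inner_left, hKA z hz, inner_zero_right]
    have hk := hkey (A' v) y hu (by rw [← hhval]; exact hv1)
    have h2 : ⟪v, x - px⟫ = 0 := hv2 _ hhxpx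
    have h3 : ⟪v, x⟫ = ⟪v, px⟫ := by
      have := inner_sub_right (𝕜 := ℝ) v x px
      rw [h2] at this; linarith
    rw [h3, ← hy, ← ContinuousLinearMap.adjoint_inner_left]
    exact hk
  have hSne : Sset.Nonempty := ⟨f y₀, y₀, hAy₀, rfl⟩
  have hSbdd : BddBelow Sset := by
    refine ⟨0, ?_⟩
    rintro s ⟨y, _, rfl⟩
    exact hpos y
  have hD0 : (0:ℝ) ∈ Dset := by
    refine ⟨0, ?_, fun z _ => inner_zero_left z, (inner_zero_left x).symm⟩
    rw [hhval, map_zero]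
    rw [(hker 0).2 hf0]
    norm_num
  have hDbdd : BddAbove Dset := ⟨f y₀, fun r hr => claim1 r hr (f y₀) ⟨y₀, hAy₀, rfl⟩⟩
  rw [goaleq.1, goaleq.2]
  apply le_antisymm
  · -- sInf Sset ≤ sSup Dset
    by_cases hμ : sInf Sset ≤ 0
    · exact hμ.trans (le_csSup hDbdd hD0)
    · push_neg at hμ
      set μ := sInf Sset with hμdef
      set U := {y : Euc n | f y < μ} with hUdef
      have hUopen : IsOpen U := isOpen_lt fcont continuous_const
      have hUconv : Convex ℝ U := by
        have h := hconv.convex_lt μ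
        have e : {x ∈ univ | f x < μ} = U := by ext z; simp [hUdef]
        rwa [e] at h
      have hEconv : Convex ℝ {y : Euc n | A y = px} := by
        intro a ha b hb s t hs ht hst
        simp only [mem_setOf_eq] at ha hb ⊢
        rw [map_add, map_smul, map_smul, ha, hb, ← add_smul, hst, one_smul]
      have hdisj : Disjoint U {y : Euc n | A y = px} := by
        rw [Set.disjoint_left]
        rintro y hyU hyE
        have h1 : μ ≤ f y := csInf_le hSbdd ⟨y, hyE, rfl⟩
        have h2 : f y < μ := hyU
        linarith
      obtain ⟨φ, cc, hφU, hφE⟩ := geometric_hahn_banach_open hUconv hUopen hEconv hdisj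
      set w := (InnerProductSpace.toDual ℝ (Euc n)).symm φ with hwdef
      have hφ : ∀ y, ⟪w, y⟫ = φ y := fun y => InnerProductSpace.toDual_symm_apply
      have hc0 : 0 < cc := by
        have h0 : (0 : Euc n) ∈ U := by
          show f 0 < μ
          rw [hf0]; exact hμ
        have := hφU 0 h0
        rwa [map_zero] at this
      have hcc' : cc ≤ φ y₀ := hφE y₀ hAy₀
      have hc' : 0 < φ y₀ := lt_of_lt_of_le hc0 hcc'
      have hwker : ∀ k : Euc n, A k = 0 → ⟪w, k⟫ = 0 := by
        intro k hk
        rw [hφ]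
        by_contra hne
        have hE : ∀ t : ℝ, cc ≤ φ (y₀ + t • k) := by
          intro t
          apply hφE
          show A (y₀ + t • k) = px
          rw [map_add, map_smul, hk, smul_zero, add_zero, hAy₀]
        have h2 := hE ((cc - 1 - φ y₀) / φ k)
        rw [map_add, map_smul, smul_eq_mul, div_mul_cancel₀ _ hne] at h2
        linarith
      have hv₀ex : w ∈ LinearMap.range (A' : Euc m →ₗ[ℝ] Euc n) := by
        set Rg := LinearMap.range (A' : Euc m →ₗ[ℝ] Euc n) with hRg
        set w' := w - (Submodule.orthogonalProjectionOnto Rg w : Euc n) with hw'def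
        have hw'o : w' ∈ Rgᗮ := Submodule.sub_starProjection_mem_orthogonal w
        have hAw' : A w' = 0 := by
          have h1 : ∀ v : Euc m, ⟪A w', v⟫ = 0 := by
            intro v
            rw [← ContinuousLinearMap.adjoint_inner_right]
            exact Submodule.inner_left_of_mem_orthogonal (LinearMap.mem_range_self (A' : Euc m →ₗ[ℝ] Euc n) v) hw'o
          exact inner_self_eq_zero.1 (h1 (A w'))
        have h1 : ⟪w, w'⟫ = 0 := hwker w' hAw'
        have h2 : ⟪(Submodule.orthogonalProjectionOnto Rg w : Euc n), w'⟫ = 0 :=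
          Submodule.inner_right_of_mem_orthogonal (SetLike.coe_mem _) hw'o
        have h3 : ⟪w', w'⟫ = 0 := by
          nth_rewrite 1 [hw'def]
          rw [inner_sub_left, h1, h2, sub_zero]
        have hw'0 : w' = 0 := inner_self_eq_zero.1 h3
        have h4 : w = (Submodule.orthogonalProjectionOnto Rg w : Euc n) := by
          rw [hw'def] at hw'0
          rwa [sub_eq_zero] at hw'0
        rw [h4]
        exact SetLike.coe_mem _
      obtain ⟨v₀, hv₀⟩ : ∃ v₀, A' v₀ = w := hv₀ex
      have hvpx0 : ⟪v₀, px⟫ = φ y₀ := by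
        rw [← hAy₀, ← ContinuousLinearMap.adjoint_inner_left, hv₀, hφ]
      have hgwb : ∀ y : Euc n, f y ≤ 1 → (∀ z, f z = 0 → ⟪y, z⟫ = 0) → ⟪y, w⟫ * μ ≤ φ y₀ := by
        intro y hy1 hy2
        apply aux_le_of_mul _ _ hc'
        intro t ht0 ht1
        have hft : f ((t * μ) • y) < μ := by
          rw [hhom _ (by positivity)]
          nlinarith [hpos y, mul_nonneg (mul_pos ht0 hμ).le (sub_nonneg.2 hy1), mul_pos (sub_pos.2 ht1) hμ]
        have h2 := hφU _ hft
        rw [map_smul, smul_eq_mul, ← hφ] at h2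
        calc ⟪y, w⟫ * μ * t = t * μ * ⟪w, y⟫ := by rw [real_inner_comm]; ring
        _ ≤ cc := le_of_lt h2
        _ ≤ φ y₀ := hcc'
      set Z : Submodule ℝ (Euc m) := Submodule.comap (A'.toLinearMap) K with hZdef
      have hZmem : ∀ z : Euc m, hh z = 0 ↔ z ∈ Z := by
        intro z
        rw [hhval, hker]
        exact Iff.symm (hmemK (A' z))
      set v₁ : Euc m := (μ / φ y₀) • v₀ with hv₁
      set v : Euc m := v₁ - (Submodule.orthogonalProjectionOnto Z v₁ : Euc m) with hvdef
      have hvZo : v ∈ Zᗮ := Submodule.sub_starProjection_mem_orthogonal v₁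
      have hvZ : ∀ z, hh z = 0 → ⟪v, z⟫ = 0 := by
        intro z hz
        exact Submodule.inner_left_of_mem_orthogonal ((hZmem z).1 hz) hvZo
      have hxZ : ∀ z, z ∈ Z → ⟪z, px⟫ = 0 := by
        intro z hz
        rw [← hAy₀, ← ContinuousLinearMap.adjoint_inner_left]
        have h1 : A' z ∈ K := hz
        exact Submodule.inner_right_of_mem_orthogonal h1 hy₀K
      have hhv1 : ⟪v, x⟫ = μ := by
        have e1 : ⟪v, x - px⟫ = 0 := hvZ _ hhxpx
        have e2 : ⟪(Submodule.orthogonalProjectionOnto Z v₁ : Euc m), px⟫ = 0 := hxZ _ (SetLike.coe_mem _)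
        have e3 : ⟪v₁, px⟫ = μ := by
          rw [hv₁, real_inner_smul_left, hvpx0, div_mul_cancel₀ _ hc'.ne']
        have e4 : ⟪v, px⟫ = μ := by
          rw [hvdef, inner_sub_left, e2, e3, sub_zero]
        have e5 : ⟪v, x - px⟫ = ⟪v, x⟫ - ⟪v, px⟫ := inner_sub_right v x px
        linarith
      have hhvle : hh v ≤ 1 := by
        rw [hhval]
        have hAk : f (A' ((Submodule.orthogonalProjectionOnto Z v₁ : Euc m))) = 0 := by
          have hz : (Submodule.orthogonalProjectionOnto Z v₁ : Euc m) ∈ Z := SetLike.coe_mem _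
          exact (hmemK _).1 hz
        have hnk : f (- A' ((Submodule.orthogonalProjectionOnto Z v₁ : Euc m))) = 0 :=
          (hmemK _).1 (K.neg_mem ((hmemK _).2 hAk))
        have e1 : A' v = A' v₁ + (- A' ((Submodule.orthogonalProjectionOnto Z v₁ : Euc m))) := by
          rw [hvdef, map_sub, sub_eq_add_neg]
        rw [e1, hginv _ _ hnk]
        have e2 : A' v₁ = (μ / φ y₀) • w := by rw [hv₁, map_smul, hv₀]
        rw [e2, hTdef]
        apply csSup_le ⟨0, hT0 _⟩
        rintro r ⟨y, h1, h2, rfl⟩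
        rw [real_inner_smul_right]
        have h3 : ⟪y, w⟫ * μ ≤ φ y₀ := hgwb y h1 h2
        rw [div_mul_eq_mul_div, div_le_one hc']
        linarith [h3]
      exact le_csSup hDbdd ⟨v, hhvle, hvZ, hhv1.symm⟩
  · exact csSup_le ⟨0, hD0⟩ (fun r hr => le_csInf hSne (fun s hs => claim1 r hr s hs))

/-- `𝒫_A f = 𝒟(ℳ_A(𝒟f))` when `Ker f ⊆ Ker A`; in particular for all `A`
when `f` is positive definite. -/
theorem stmt_3 {n m : ℕ} (f : Euc n → ℝ) (hf : CHplus n 1 f) :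
    (∀ A : Euc n →L[ℝ] Euc m, (∀ x, f x = 0 → A x = 0) →
      Pop A f = NormDual (Mop A (NormDual f))) ∧
    ((∀ x : Euc n, x ≠ 0 → 0 < f x) →
      ∀ A : Euc n →L[ℝ] Euc m, Pop A f = NormDual (Mop A (NormDual f))) := by
  constructor
  · intro A hA
    exact master f hf A hA
  · intro hpd A
    apply master f hf A
    intro x hx
    have hx0 : x = 0 := by
      by_contra h
      exact absurd hx (ne_of_gt (hpd x h))
    rw [hx0, map_zero]

end
end

section
/- Let g ∈ CH⁺₁(ℝⁿ) be an even function and let S ⊆ ℝⁿ be a compact symmetric set. Then genus(S) ≤ genus(∂g(S)), where ∂g(S) = ⋃_{x∈S} ∂g(x). -/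
open Set
open scoped RealInnerProductSpace

noncomputable section

section StmtNineAux
open Metric

variable {n : ℕ} {g : Euc n → ℝ}

lemma g_zero (hhom : ∀ t : ℝ, 0 < t → ∀ x, g (t • x) = t ^ (1:ℝ) * g x) : g 0 = 0 := by
  have := hhom 2 (by norm_num) 0
  rw [smul_zero, Real.rpow_one] at this
  linarith

lemma mem_subdiff_iff (hhom : ∀ t : ℝ, 0 < t → ∀ x, g (t • x) = t ^ (1:ℝ) * g x)
    {x v : Euc n} : v ∈ subdiff g x ↔ (∀ y, ⟪v, y⟫ ≤ g y) ∧ ⟪v, x⟫ = g x := by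
  constructor
  · intro hv
    have h2 := hv ((2:ℝ) • x)
    have h12 := hv ((1/2:ℝ) • x)
    rw [hhom 2 (by norm_num) x, Real.rpow_one] at h2
    rw [hhom (1/2) (by norm_num) x, Real.rpow_one] at h12
    have e2 : ⟪v, (2:ℝ) • x - x⟫ = ⟪v, x⟫ := by
      rw [two_smul]; simp [inner_sub_right, inner_add_right]
    have e12 : ⟪v, (1/2:ℝ) • x - x⟫ = -(1/2) * ⟪v, x⟫ := by
      rw [show (1/2:ℝ) • x - x = (-(1/2):ℝ) • x by module]
      rw [real_inner_smul_right]
    rw [e2] at h2; rw [e12] at h12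
    have hvx : ⟪v, x⟫ = g x := by linarith
    refine ⟨fun y => ?_, hvx⟩
    have := hv y
    rw [inner_sub_right] at this
    linarith
  · rintro ⟨h1, h2⟩ y
    rw [inner_sub_right, h2]
    have := h1 y
    linarith

lemma subdiff_convex (x : Euc n) : Convex ℝ (subdiff g x) := by
  intro v hv w hw a b ha hb hab
  intro y
  have h1 := hv y; have h2 := hw y
  rw [inner_add_left, real_inner_smul_left, real_inner_smul_left]
  calc a * ⟪v, y - x⟫ + b * ⟪w, y - x⟫
      ≤ a * (g y - g x) + b * (g y - g x) := by
        gcongr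
    _ = g y - g x := by rw [← add_mul, hab, one_mul]

lemma subdiff_isClosed (x : Euc n) : IsClosed (subdiff g x) := by
  have : subdiff g x = ⋂ y, {v : Euc n | ⟪v, y - x⟫ ≤ g y - g x} := by
    ext v; simp [subdiff, Set.mem_iInter]
  rw [this]
  exact isClosed_iInter fun y =>
    isClosed_le (Continuous.inner continuous_id continuous_const) continuous_const

lemma subdiff_neg (hge : ∀ x, g (-x) = g x) {x v : Euc n} (hv : v ∈ subdiff g x) :
    -v ∈ subdiff g (-x) := by
  intro y
  calc ⟪-v, y - -x⟫ = ⟪v, -y - x⟫ := by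
        rw [show y - -x = -(-y - x) by module, inner_neg_left, inner_neg_right, neg_neg]
  _ ≤ g (-y) - g x := hv (-y)
  _ = g y - g (-x) := by rw [hge, hge]

lemma subdiff_nonempty (hconv : ConvexOn ℝ Set.univ g) (hcont : Continuous g)
    (x : Euc n) : (subdiff g x).Nonempty := by
  set s : Set (Euc n × ℝ) := {p | g p.1 < p.2} with hs
  have hsopen : IsOpen s := isOpen_lt (hcont.comp continuous_fst) continuous_snd
  have hsconv : Convex ℝ s := by
    rintro p hp q hq a b ha hb hab
    simp only [hs, Set.mem_setOf_eq] at *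
    have hgc : g (a • p.1 + b • q.1) ≤ a * g p.1 + b * g q.1 :=
      hconv.2 (Set.mem_univ _) (Set.mem_univ _) ha hb hab
    have : a * g p.1 + b * g q.1 < a * p.2 + b * q.2 := by
      rcases eq_or_lt_of_le ha with h | h
      · rcases eq_or_lt_of_le hb with h' | h'
        · exfalso; rw [← h, ← h'] at hab; norm_num at hab
        · rw [← h]; simpa using mul_lt_mul_of_pos_left hq h'
      · have h1 : a * g p.1 < a * p.2 := mul_lt_mul_of_pos_left hp h
        have h2 : b * g q.1 ≤ b * q.2 := mul_le_mul_of_nonneg_left (le_of_lt hq) hb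
        linarith
    exact lt_of_le_of_lt hgc this
  have hdisj : (x, g x) ∉ s := by simp [hs]
  obtain ⟨f, hf⟩ := geometric_hahn_banach_open_point hsconv hsopen hdisj
  set c : ℝ := f (0, 1) with hc
  have hsplit : ∀ y : Euc n, ∀ t : ℝ, f (y, t) = f (y, 0) + t * c := by
    intro y t
    have : (y, t) = (y, (0:ℝ)) + t • ((0:Euc n), (1:ℝ)) := by
      simp [Prod.ext_iff]
    rw [this, map_add, map_smul, smul_eq_mul, hc]
  have hcneg : c < 0 := by
    have h1 : f (x, g x + 1) < f (x, g x) := hf _ (by simp [hs])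
    rw [hsplit x (g x + 1), hsplit x (g x)] at h1
    linarith
  set d : ℝ := -c with hd
  have hdpos : 0 < d := by simp only [hd]; linarith
  have key : ∀ y : Euc n, f (y, 0) + g y * c ≤ f (x, 0) + g x * c := by
    intro y
    by_contra hcon
    push_neg at hcon
    set A := f (y, 0) + g y * c with hA
    set B := f (x, 0) + g x * c with hB
    set s₀ : ℝ := (A - B) / (2 * d) with hs₀
    have hs0 : (0:ℝ) < s₀ := div_pos (by linarith) (by linarith)
    have h2 := hf (y, g y + s₀) (by simp [hs]; linarith)
    rw [hsplit y (g y + s₀), hsplit x (g x)] at h2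
    have hval : s₀ * d = (A - B) / 2 := by
      rw [hs₀]; field_simp
    have hc' : c = -d := by rw [hd]; ring
    have h2' : A - s₀ * d < B := by
      rw [hA, hB, hc']
      ring_nf
      ring_nf at h2
      linarith
    linarith [h2', hval, hcon]
  set L : Euc n →L[ℝ] ℝ := d⁻¹ • (f.comp (ContinuousLinearMap.inl ℝ (Euc n) ℝ)) with hL
  refine ⟨(InnerProductSpace.toDual ℝ (Euc n)).symm L, fun y => ?_⟩
  rw [InnerProductSpace.toDual_symm_apply]
  have hLy : L (y - x) = d⁻¹ * (f (y, 0) - f (x, 0)) := by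
    simp [hL, ContinuousLinearMap.smul_apply, map_sub]
    ring
  rw [hLy]
  have hkey := key y
  have h2 : f (y, 0) - f (x, 0) ≤ (g y - g x) * d := by
    have h3 : f (y, 0) - f (x, 0) ≤ g x * c - g y * c := by linarith
    calc f (y, 0) - f (x, 0) ≤ g x * c - g y * c := h3
    _ = (g y - g x) * d := by rw [hd]; ring
  calc d⁻¹ * (f (y, 0) - f (x, 0)) ≤ d⁻¹ * ((g y - g x) * d) :=
        mul_le_mul_of_nonneg_left h2 (le_of_lt (inv_pos.mpr hdpos))
  _ = g y - g x := by field_simp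

lemma exists_bound (hcont : Continuous g) : ∃ C : ℝ, 0 < C ∧
    ∀ v : Euc n, (∀ y, ⟪v, y⟫ ≤ g y) → ‖v‖ ≤ C := by
  obtain ⟨M, hM⟩ := (isCompact_closedBall (0:Euc n) 1).exists_bound_of_continuousOn
    hcont.continuousOn
  refine ⟨max M 1, lt_of_lt_of_le one_pos (le_max_right _ _), fun v hv => ?_⟩
  rcases eq_or_ne v 0 with rfl | hv0
  · rw [norm_zero]; positivity
  · have hy : ‖v‖⁻¹ • v ∈ closedBall (0:Euc n) 1 := by
      simp [norm_smul, norm_inv, inv_mul_cancel₀ (norm_ne_zero_iff.mpr hv0)]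
    have h1 : ⟪v, ‖v‖⁻¹ • v⟫ = ‖v‖ := by
      rw [real_inner_smul_right, real_inner_self_eq_norm_sq]
      field_simp [norm_ne_zero_iff.mpr hv0]
    have := hv (‖v‖⁻¹ • v)
    rw [h1] at this
    calc ‖v‖ ≤ g (‖v‖⁻¹ • v) := this
    _ ≤ ‖g (‖v‖⁻¹ • v)‖ := le_abs_self _
    _ ≤ M := hM _ hy
    _ ≤ max M 1 := le_max_left _ _

lemma conv_thick {ι : Type*} {C : Set (Euc n)} (hC : Convex ℝ C) (hCne : C.Nonempty)
    {η : ℝ} (F : Finset ι) (w : ι → ℝ) (u : ι → Euc n)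
    (hw : ∀ i ∈ F, 0 ≤ w i) (hw1 : ∑ i ∈ F, w i = 1)
    (hu : ∀ i ∈ F, w i ≠ 0 → u i ∈ thickening η C) :
    ∃ q ∈ C, dist (∑ i ∈ F, w i • u i) q ≤ η := by
  classical
  have hsel : ∀ i : ι, ∃ p : Euc n, p ∈ C ∧ (i ∈ F → w i ≠ 0 → dist (u i) p < η) := by
    intro i
    by_cases hi : i ∈ F ∧ w i ≠ 0
    · obtain ⟨z, hz, hdz⟩ := Metric.mem_thickening_iff.mp (hu i hi.1 hi.2)
      exact ⟨z, hz, fun _ _ => hdz⟩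
    · exact ⟨hCne.choose, hCne.choose_spec, fun h1 h2 => absurd ⟨h1, h2⟩ hi⟩
  choose p hpC hpd using hsel
  refine ⟨∑ i ∈ F, w i • p i, hC.sum_mem hw hw1 (fun i hi => hpC i), ?_⟩
  rw [dist_eq_norm, ← Finset.sum_sub_distrib]
  calc ‖∑ i ∈ F, (w i • u i - w i • p i)‖ ≤ ∑ i ∈ F, ‖w i • u i - w i • p i‖ :=
        norm_sum_le _ _
  _ ≤ ∑ i ∈ F, w i * η := by
      apply Finset.sum_le_sum
      intro i hi
      rw [← smul_sub, norm_smul, Real.norm_eq_abs, abs_of_nonneg (hw i hi)]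
      rcases eq_or_ne (w i) 0 with h0 | h0
      · simp [h0]
      · have := hpd i hi h0
        have hwp : 0 < w i := lt_of_le_of_ne (hw i hi) (Ne.symm h0)
        rw [← dist_eq_norm]
        exact le_of_lt (by nlinarith [dist_nonneg (x := u i) (y := p i)])
  _ = η := by rw [← Finset.sum_mul, hw1, one_mul]

def K0 (g : Euc n → ℝ) : Set (Euc n) := {v | ∀ y, ⟪v, y⟫ ≤ g y}

lemma K0_isClosed : IsClosed (K0 g) := by
  have h : K0 g = ⋂ y, {v : Euc n | ⟪v, y⟫ ≤ g y} := by
    ext v; simp [K0, Set.mem_iInter]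
  rw [h]
  exact isClosed_iInter fun y =>
    isClosed_le (Continuous.inner continuous_id continuous_const) continuous_const

lemma K0_isCompact (hcont : Continuous g) : IsCompact (K0 g) := by
  obtain ⟨C, _, hC⟩ := exists_bound hcont
  apply Metric.isCompact_of_isClosed_isBounded K0_isClosed
  exact (Metric.isBounded_closedBall (x := (0:Euc n)) (r := C)).subset
    (fun v hv => by simpa [Metric.mem_closedBall, dist_zero_right] using hC v hv)

lemma g_lip (hconv : ConvexOn ℝ Set.univ g) (hcont : Continuous g)
    (hhom : ∀ t : ℝ, 0 < t → ∀ x, g (t • x) = t ^ (1:ℝ) * g x)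
    {C : ℝ} (hC : ∀ v : Euc n, (∀ y, ⟪v, y⟫ ≤ g y) → ‖v‖ ≤ C) :
    ∀ x y : Euc n, g x - g y ≤ C * dist x y := by
  intro x y
  obtain ⟨v, hv⟩ := subdiff_nonempty hconv hcont x
  obtain ⟨hvK, hvx⟩ := (mem_subdiff_iff hhom).mp hv
  have h1 : g x - g y ≤ ⟪v, x - y⟫ := by
    have := hvK y
    rw [inner_sub_right, hvx]
    linarith
  calc g x - g y ≤ ⟪v, x - y⟫ := h1
  _ ≤ ‖v‖ * ‖x - y‖ := real_inner_le_norm v (x - y)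
  _ ≤ C * dist x y := by
      rw [dist_eq_norm]
      exact mul_le_mul_of_nonneg_right (hC v hvK) (norm_nonneg _)

lemma subdiff_usc (hconv : ConvexOn ℝ Set.univ g) (hcont : Continuous g)
    (hhom : ∀ t : ℝ, 0 < t → ∀ x, g (t • x) = t ^ (1:ℝ) * g x)
    (c : Euc n) {ε : ℝ} (hε : 0 < ε) :
    ∃ δ : ℝ, 0 < δ ∧ ∀ x : Euc n, dist x c ≤ δ →
      subdiff g x ⊆ thickening ε (subdiff g c) := by
  obtain ⟨C, hC0, hC⟩ := exists_bound hcont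
  -- first find d > 0 such that small defect implies membership in the thickening
  have key : ∃ d : ℝ, 0 < d ∧
      {v | v ∈ K0 g ∧ g c - ⟪v, c⟫ ≤ d} ⊆ thickening ε (subdiff g c) := by
    by_contra hcontra
    push_neg at hcontra
    set A : ℕ → Set (Euc n) := fun k =>
      {v | v ∈ K0 g ∧ g c - ⟪v, c⟫ ≤ 1 / (k + 1)} \ thickening ε (subdiff g c) with hA
    have hAne : ∀ k, (A k).Nonempty := by
      intro k
      obtain ⟨v, hv1, hv2⟩ := not_subset.mp (hcontra (1 / (k + 1)) (by positivity))
      exact ⟨v, hv1, hv2⟩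
    have hAclosed : ∀ k, IsClosed (A k) := by
      intro k
      have h1 : IsClosed {v : Euc n | g c - ⟪v, c⟫ ≤ 1 / (k + 1)} :=
        isClosed_le
          (Continuous.sub continuous_const (Continuous.inner continuous_id continuous_const))
          continuous_const
      exact (K0_isClosed.inter h1).sdiff isOpen_thickening
    have hAdec : ∀ k, A (k + 1) ⊆ A k := by
      intro k v hv
      refine ⟨⟨hv.1.1, le_trans hv.1.2 ?_⟩, hv.2⟩
      apply one_div_le_one_div_of_le (by positivity)
      push_cast
      linarith
    have hAcomp : IsCompact (A 0) :=
      (K0_isCompact hcont).of_isClosed_subset (hAclosed 0) (fun v hv => hv.1.1)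
    obtain ⟨v, hv⟩ := IsCompact.nonempty_iInter_of_sequence_nonempty_isCompact_isClosed
      A hAdec hAne hAcomp hAclosed
    simp only [Set.mem_iInter] at hv
    have hvK : v ∈ K0 g := (hv 0).1.1
    have hnt : v ∉ thickening ε (subdiff g c) := (hv 0).2
    have hdef : g c - ⟪v, c⟫ ≤ 0 := by
      by_contra hd
      push_neg at hd
      obtain ⟨k, hk⟩ := exists_nat_one_div_lt hd
      exact absurd ((hv k).1.2) (by push_cast; push_cast at hk; linarith)
    have hvc : ⟪v, c⟫ = g c := le_antisymm (hvK c) (by linarith)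
    have : v ∈ subdiff g c := (mem_subdiff_iff hhom).mpr ⟨hvK, hvc⟩
    exact hnt (self_subset_thickening hε _ this)
  obtain ⟨d, hd0, hdsub⟩ := key
  refine ⟨d / (2 * C), by positivity, fun x hx v hv => ?_⟩
  obtain ⟨hvK, hvx⟩ := (mem_subdiff_iff hhom).mp hv
  apply hdsub
  refine ⟨hvK, ?_⟩
  have h1 : g c - g x ≤ C * dist c x := g_lip hconv hcont hhom hC c x
  have h2 : ⟪v, x - c⟫ ≤ ‖v‖ * ‖x - c‖ := real_inner_le_norm _ _
  have h3 : ‖v‖ * ‖x - c‖ ≤ C * dist x c := by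
    rw [dist_eq_norm]
    exact mul_le_mul_of_nonneg_right (hC v hvK) (norm_nonneg _)
  have h4 : g c - ⟪v, c⟫ = (g c - g x) + ⟪v, x - c⟫ := by
    rw [inner_sub_right, hvx]; ring
  rw [h4]
  rw [dist_comm] at h1
  have h5 : C * dist x c ≤ C * (d / (2 * C)) := mul_le_mul_of_nonneg_left hx (le_of_lt hC0)
  have h6 : C * (d / (2 * C)) = d / 2 := by field_simp
  linarith

lemma T_isCompact (hcont : Continuous g)
    (hhom : ∀ t : ℝ, 0 < t → ∀ x, g (t • x) = t ^ (1:ℝ) * g x)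
    {S : Set (Euc n)} (hSc : IsCompact S) :
    IsCompact (⋃ x ∈ S, subdiff g x) := by
  have hQ : IsCompact (((K0 g) ×ˢ S) ∩ {p : Euc n × Euc n | ⟪p.1, p.2⟫ = g p.2}) := by
    have h1 : IsClosed {p : Euc n × Euc n | ⟪p.1, p.2⟫ = g p.2} :=
      isClosed_eq continuous_inner (hcont.comp continuous_snd)
    exact IsCompact.inter_right ((K0_isCompact hcont).prod hSc) h1
  have himg := hQ.image (continuous_fst : Continuous (Prod.fst : Euc n × Euc n → Euc n))
  convert himg using 1
  ext v
  simp only [Set.mem_iUnion, Set.mem_image, Set.mem_inter_iff, Set.mem_prod, Set.mem_setOf_eq]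
  constructor
  · rintro ⟨x, hx, hv⟩
    obtain ⟨h1, h2⟩ := (mem_subdiff_iff hhom).mp hv
    exact ⟨(v, x), ⟨⟨h1, hx⟩, h2⟩, rfl⟩
  · rintro ⟨⟨w, x⟩, ⟨⟨h1, hx⟩, h2⟩, rfl⟩
    exact ⟨x, hx, (mem_subdiff_iff hhom).mpr ⟨h1, h2⟩⟩
instance {m : ℕ} : TietzeExtension (Euc m) :=
  .of_homeo (PiLp.continuousLinearEquiv 2 ℝ (fun _ : Fin m => ℝ)).toHomeomorph

theorem stmt9_main {n : ℕ} (g : Euc n → ℝ) (hconv : ConvexOn ℝ Set.univ g)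
    (hhom : ∀ t : ℝ, 0 < t → ∀ x, g (t • x) = t ^ (1:ℝ) * g x)
    (hge : ∀ x, g (-x) = g x)
    (S : Set (Euc n)) (hSc : IsCompact S) (hSs : ∀ x ∈ S, -x ∈ S) :
    genus S ≤ genus (⋃ x ∈ S, subdiff g x) := by
  classical
  have hcont : Continuous g := by
    rw [← continuousOn_univ]
    exact hconv.continuousOn isOpen_univ
  set T : Set (Euc n) := ⋃ x ∈ S, subdiff g x with hT
  have hTc : IsCompact T := T_isCompact hcont hhom hSc
  have hTcl : IsClosed T := hTc.isClosed
  have hTs : ∀ z ∈ T, -z ∈ T := by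
    intro z hz
    rw [hT, Set.mem_iUnion₂] at hz ⊢
    obtain ⟨x, hx, hzx⟩ := hz
    exact ⟨-x, hSs x hx, subdiff_neg hge hzx⟩
  apply le_sInf
  rintro b ⟨m, rfl, φ, hφc, hφ0, hφodd⟩
  -- Tietze extension of φ from T
  obtain ⟨F, hF⟩ := ContinuousMap.exists_restrict_eq (Y := Euc m) hTcl
    ⟨T.restrict φ, hφc.restrict⟩
  have hFeq : ∀ z ∈ T, F z = φ z := by
    intro z hz
    have := congrFun (congrArg ContinuousMap.toFun hF) ⟨z, hz⟩
    exact this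
  -- odd extension
  set Φ : Euc n → Euc m := fun z => (2⁻¹ : ℝ) • (F z - F (-z)) with hΦ
  have hΦc : Continuous Φ := by
    apply Continuous.fun_const_smul
    exact F.continuous.sub (F.continuous.comp continuous_neg)
  have hΦodd : ∀ z, Φ (-z) = -Φ z := by
    intro z
    simp only [hΦ, neg_neg, ← smul_neg, neg_sub]
  have hΦT : ∀ z ∈ T, Φ z = φ z := by
    intro z hz
    have h1 : φ (-z) = -φ z := hφodd z hz
    simp only [hΦ, hFeq z hz, hFeq (-z) (hTs z hz), h1, sub_neg_eq_add]
    rw [← two_smul ℝ (φ z), smul_smul]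
    norm_num
  -- find ε with thickening ε T inside the nonvanishing set of Φ
  have hUopen : IsOpen {z : Euc n | Φ z ≠ 0} := by
    have : {z : Euc n | Φ z ≠ 0} = Φ ⁻¹' ({0}ᶜ) := rfl
    rw [this]
    exact hΦc.isOpen_preimage _ isClosed_singleton.isOpen_compl
  have hTU : T ⊆ {z : Euc n | Φ z ≠ 0} := by
    intro z hz
    simp only [Set.mem_setOf_eq, hΦT z hz]
    exact hφ0 z hz
  obtain ⟨ε, hε, hthick⟩ := hTc.exists_thickening_subset_open hUopen hTU
  -- radii
  have hrad : ∀ c : Euc n, ∃ r : ℝ, 0 < r ∧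
      (∀ x : Euc n, dist x c ≤ 2 * r → subdiff g x ⊆ thickening (ε/2) (subdiff g c)) ∧
      (∀ x : Euc n, dist x (-c) ≤ 2 * r → subdiff g x ⊆ thickening (ε/2) (subdiff g (-c))) := by
    intro c
    obtain ⟨δ₁, hδ₁, h₁⟩ := subdiff_usc hconv hcont hhom c (half_pos hε)
    obtain ⟨δ₂, hδ₂, h₂⟩ := subdiff_usc hconv hcont hhom (-c) (half_pos hε)
    refine ⟨min δ₁ δ₂ / 2, by positivity, fun x hx => h₁ x ?_, fun x hx => h₂ x ?_⟩
    · calc dist x c ≤ 2 * (min δ₁ δ₂ / 2) := hx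
      _ = min δ₁ δ₂ := by ring
      _ ≤ δ₁ := min_le_left _ _
    · calc dist x (-c) ≤ 2 * (min δ₁ δ₂ / 2) := hx
      _ = min δ₁ δ₂ := by ring
      _ ≤ δ₂ := min_le_right _ _
  choose r hr0 hr1 hr2 using hrad
  -- subgradient selection
  have hv : ∀ c : Euc n, (subdiff g c).Nonempty := subdiff_nonempty hconv hcont
  choose v hvmem using hv
  -- finite subcover
  obtain ⟨t, ht⟩ := hSc.elim_finite_subcover (fun c : ↥S => ball (c : Euc n) (r c))
    (fun c => isOpen_ball)
    (fun x hx => Set.mem_iUnion.mpr ⟨⟨x, hx⟩, mem_ball_self (hr0 x)⟩)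
  -- partition-of-unity data
  set ctr : ↥S × Bool → Euc n := fun p => if p.2 then (p.1 : Euc n) else -(p.1 : Euc n)
    with hctr
  set vec : ↥S × Bool → Euc n := fun p => if p.2 then v (p.1 : Euc n) else -(v (p.1 : Euc n))
    with hvec
  set rad : ↥S × Bool → ℝ := fun p => r (p.1 : Euc n) with hradf
  set ρ : ↥S × Bool → Euc n → ℝ := fun p x => max (rad p - dist x (ctr p)) 0 with hρ
  set Fs : Finset (↥S × Bool) := t ×ˢ Finset.univ with hFs
  set D : Euc n → ℝ := fun x => ∑ p ∈ Fs, ρ p x with hD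
  set NN : Euc n → Euc n := fun x => ∑ p ∈ Fs, ρ p x • vec p with hNN
  set ψ : Euc n → Euc n := fun x => (D x)⁻¹ • NN x with hψ
  -- basic properties of ρ
  have hρ0 : ∀ p x, 0 ≤ ρ p x := fun p x => le_max_right _ _
  have hρcont : ∀ p, Continuous (ρ p) := by
    intro p
    apply Continuous.max _ continuous_const
    exact continuous_const.sub (continuous_id.dist continuous_const)
  have hρne : ∀ p x, ρ p x ≠ 0 ↔ dist x (ctr p) < rad p := by
    intro p x
    constructor
    · intro h
      by_contra hcon
      push_neg at hcon
      apply h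
      simp only [hρ]
      exact max_eq_right (by linarith)
    · intro h
      have : 0 < rad p - dist x (ctr p) := by linarith
      simp only [hρ]
      rw [max_eq_left (le_of_lt this)]
      exact ne_of_gt this
  have hDcont : Continuous D := by
    apply continuous_finset_sum
    exact fun p _ => hρcont p
  have hNNcont : Continuous NN := by
    apply continuous_finset_sum
    exact fun p _ => (hρcont p).smul continuous_const
  -- symmetry
  have hρsymm : ∀ (c : ↥S) (b : Bool) (x : Euc n), ρ (c, !b) (-x) = ρ (c, b) x := by
    intro c b x
    have hctr' : ctr (c, !b) = -(ctr (c, b)) := by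
      cases b <;> simp [hctr]
    simp only [hρ, hctr', dist_neg_neg, hradf]
  have hvecsymm : ∀ (c : ↥S) (b : Bool), vec (c, !b) = -(vec (c, b)) := by
    intro c b
    cases b <;> simp [hvec]
  have hmemF : ∀ (c : ↥S) (b : Bool), ((c, b) ∈ Fs ↔ c ∈ t) := by
    intro c b
    simp [hFs, Finset.mem_product]
  have hDsymm : ∀ x, D (-x) = D x := by
    intro x
    rw [hD]
    refine Finset.sum_nbij' (fun p => (p.1, !p.2)) (fun p => (p.1, !p.2)) ?_ ?_ ?_ ?_ ?_
    · intro p hp; rw [hmemF] at hp ⊢; exact hp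
    · intro p hp; rw [hmemF] at hp ⊢; exact hp
    · intro p _; simp
    · intro p _; simp
    · intro p _
      obtain ⟨c, b⟩ := p
      have h := hρsymm c (!b) x
      rwa [Bool.not_not] at h
  have hNNsymm : ∀ x, NN (-x) = -(NN x) := by
    intro x
    rw [hNN, ← Finset.sum_neg_distrib]
    refine Finset.sum_nbij' (fun p => (p.1, !p.2)) (fun p => (p.1, !p.2)) ?_ ?_ ?_ ?_ ?_
    · intro p hp; rw [hmemF] at hp ⊢; exact hp
    · intro p hp; rw [hmemF] at hp ⊢; exact hp
    · intro p _; simp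
    · intro p _; simp
    · intro p _
      obtain ⟨c, b⟩ := p
      have h := hρsymm c (!b) x
      rw [Bool.not_not] at h
      rw [h, hvecsymm c b, smul_neg, neg_neg]
  have hψodd : ∀ x, ψ (-x) = -(ψ x) := by
    intro x
    simp only [hψ, hDsymm, hNNsymm, smul_neg]
  -- positivity of D on S
  have hDpos : ∀ x ∈ S, 0 < D x := by
    intro x hx
    obtain ⟨i, hit, hxball⟩ := Set.mem_iUnion₂.mp (ht hx)
    apply Finset.sum_pos' (fun p _ => hρ0 p x)
    refine ⟨(i, true), (hmemF i true).mpr hit, ?_⟩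
    have : dist x (ctr (i, true)) < rad (i, true) := by
      simp only [hctr, hradf, if_true]
      exact mem_ball.mp hxball
    have h2 := (hρne (i, true) x).mpr this
    exact lt_of_le_of_ne (hρ0 _ _) (Ne.symm h2)
  -- continuity of ψ on S
  have hψcont : ContinuousOn ψ S := by
    apply continuousOn_of_forall_continuousAt
    intro x hx
    apply ContinuousAt.fun_smul
    · exact (hDcont.continuousAt).inv₀ (ne_of_gt (hDpos x hx))
    · exact hNNcont.continuousAt
  -- ψ maps S into thickening ε T
  have hψmem : ∀ x ∈ S, ψ x ∈ thickening ε T := by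
    intro x hx
    have hDx : D x ≠ 0 := ne_of_gt (hDpos x hx)
    set act : Finset (↥S × Bool) := Fs.filter (fun p => ρ p x ≠ 0) with hact
    have hactne : act.Nonempty := by
      obtain ⟨i, hit, hxball⟩ := Set.mem_iUnion₂.mp (ht hx)
      refine ⟨(i, true), Finset.mem_filter.mpr ⟨(hmemF i true).mpr hit, ?_⟩⟩
      apply (hρne (i, true) x).mpr
      simp only [hctr, hradf, if_true]
      exact mem_ball.mp hxball
    obtain ⟨q, hqact, hqmax⟩ := act.exists_max_image (fun p => rad p) hactne
    have hqρ : ρ q x ≠ 0 := (Finset.mem_filter.mp hqact).2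
    have hqd : dist x (ctr q) < rad q := (hρne q x).mp hqρ
    have hctrS : ∀ p : ↥S × Bool, ctr p ∈ S := by
      intro p
      obtain ⟨c, b⟩ := p
      cases b
      · exact hSs _ c.2
      · exact c.2
    have hvecmem : ∀ p : ↥S × Bool, vec p ∈ subdiff g (ctr p) := by
      intro p
      obtain ⟨c, b⟩ := p
      cases b
      · exact subdiff_neg hge (hvmem (c : Euc n))
      · exact hvmem (c : Euc n)
    have husc : ∀ x' : Euc n, dist x' (ctr q) ≤ 2 * rad q →
        subdiff g x' ⊆ thickening (ε/2) (subdiff g (ctr q)) := by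
      obtain ⟨c, b⟩ := q
      cases b
      · simpa [hctr, hradf] using hr2 (c : Euc n)
      · simpa [hctr, hradf] using hr1 (c : Euc n)
    have hkey : ∀ p ∈ Fs, ((D x)⁻¹ * ρ p x) ≠ 0 →
        vec p ∈ thickening (ε/2) (subdiff g (ctr q)) := by
      intro p hp hne
      have hρp : ρ p x ≠ 0 := fun h => hne (by rw [h, mul_zero])
      have hpact : p ∈ act := Finset.mem_filter.mpr ⟨hp, hρp⟩
      have hpd : dist x (ctr p) < rad p := (hρne p x).mp hρp
      have hrle : rad p ≤ rad q := hqmax p hpact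
      have hdctr : dist (ctr p) (ctr q) ≤ 2 * rad q := by
        calc dist (ctr p) (ctr q) ≤ dist (ctr p) x + dist x (ctr q) := dist_triangle _ _ _
        _ ≤ rad p + rad q := by
            rw [dist_comm (ctr p) x]
            linarith
        _ ≤ 2 * rad q := by linarith
      exact husc (ctr p) hdctr (hvecmem p)
    have hsum1 : ∑ p ∈ Fs, (D x)⁻¹ * ρ p x = 1 := by
      rw [← Finset.mul_sum]
      exact inv_mul_cancel₀ hDx
    obtain ⟨q', hq'mem, hq'd⟩ := conv_thick (subdiff_convex (ctr q))
      (subdiff_nonempty hconv hcont (ctr q)) Fs (fun p => (D x)⁻¹ * ρ p x) vec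
      (fun p _ => mul_nonneg (inv_nonneg.mpr (le_of_lt (hDpos x hx))) (hρ0 p x))
      hsum1 hkey
    have hψeq : ψ x = ∑ p ∈ Fs, ((D x)⁻¹ * ρ p x) • vec p := by
      simp only [hψ, hNN]
      rw [Finset.smul_sum]
      exact Finset.sum_congr rfl (fun p _ => smul_smul _ _ _)
    have hq'T : q' ∈ T := by
      rw [hT]
      exact Set.mem_biUnion (hctrS q) hq'mem
    rw [Metric.mem_thickening_iff]
    refine ⟨q', hq'T, ?_⟩
    rw [hψeq]
    exact lt_of_le_of_lt hq'd (by linarith)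
  -- conclude
  apply sInf_le
  refine ⟨m, rfl, fun x => Φ (ψ x), hΦc.comp_continuousOn hψcont, ?_, ?_⟩
  · intro x hx
    exact hthick (hψmem x hx)
  · intro x _
    show Φ (ψ (-x)) = -Φ (ψ x)
    rw [hψodd, hΦodd]

end StmtNineAux

/-- the Krasnoselskii genus does not decrease under the subgradient map of
an even function `g ∈ CH⁺₁(ℝⁿ)`. -/
theorem stmt_9 {n : ℕ} (g : Euc n → ℝ) (hg : CHplus n 1 g) (hge : ∀ x, g (-x) = g x)
    (S : Set (Euc n)) (hSc : IsCompact S) (hSs : ∀ x ∈ S, -x ∈ S) :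
    genus S ≤ genus (⋃ x ∈ S, subdiff g x) := by
  exact stmt9_main g hg.1 hg.2.2.1 hge S hSc hSs

end
end

section
/- Let f ∈ CH⁺₁(ℝᵐ), g ∈ CH⁺₁(ℝⁿ), and let A : ℝⁿ → ℝᵐ be a linear map. Define g_{Ker(A)}(x) = inf_{z ∈ Ker(A)} g(x + z). If (λ, x) is an eigenpair of the pair (f∘A, g) with λ ≠ 0, then g(x) = g_{Ker(A)}(x). -/
open Set
open scoped RealInnerProductSpace

noncomputable section

/-- eigenvectors of nonzero eigenvalues of `(f ∘ A, g)` realize the infimum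
of `g` over their coset modulo `Ker A`. -/
theorem stmt_11 {n m : ℕ} (f : Euc m → ℝ) (g : Euc n → ℝ)
    (hf : CHplus m 1 f) (hg : CHplus n 1 g)
    (A : Euc n →L[ℝ] Euc m) (lam : ℝ) (x : Euc n) (hlam : lam ≠ 0)
    (hep : IsEigenpair (fun y => f (A y)) g lam x) :
    g x = sInf {r : ℝ | ∃ z : Euc n, A z = 0 ∧ r = g (x + z)} := by
  obtain ⟨w, hw, hlw⟩ := hep
  have key : ∀ z : Euc n, A z = 0 → ⟪w, z⟫ = 0 := by
    intro z hz
    have h1 : lam * ⟪w, z⟫ ≤ 0 := by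
      have := hlw (x + z)
      simp only [add_sub_cancel_left, map_add, hz, add_zero, real_inner_smul_left, sub_self] at this
      exact this
    have h2 : lam * ⟪w, -z⟫ ≤ 0 := by
      have := hlw (x + -z)
      simp only [add_sub_cancel_left, map_add, map_neg, hz, neg_zero, add_zero,
        real_inner_smul_left, sub_self] at this
      exact this
    rw [inner_neg_right] at h2
    have : lam * ⟪w, z⟫ = 0 := le_antisymm h1 (by linarith)
    exact (mul_eq_zero.mp this).resolve_left hlam
  have hle : ∀ z : Euc n, A z = 0 → g x ≤ g (x + z) := by
    intro z hz
    have := hw (x + z)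
    rw [add_sub_cancel_left, key z hz] at this
    linarith
  refine le_antisymm (le_csInf ⟨g x, 0, by simp⟩ ?_) (csInf_le ?_ ⟨0, by simp⟩)
  · rintro r ⟨z, hz, rfl⟩
    exact hle z hz
  · refine ⟨g x, ?_⟩
    rintro r ⟨z, hz, rfl⟩
    exact hle z hz

end
end

section
/- Let p ≥ 1 and r ≥ 1/p, and let f : ℝⁿ → [0, ∞) be positively p-homogeneous. Then f is convex if and only if f^r is convex. Moreover, if p > 1 and f ∈ CH⁺_p(ℝⁿ), then ℒf = ((p−1)/p^{p*})·(𝒟(f^{1/p}))^{p*} and 𝒜f = ((p−1)^{p−1}/p^p)·(𝒟(f^{1/p}))^p, where p* = p/(p−1). -/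
open Set
open scoped RealInnerProductSpace

noncomputable section

namespace Stmt14Aux
open Real Filter
open scoped Topology

lemma core {p t : ℝ} (hp : 1 < p) (ht : 0 ≤ t) : p * t ≤ t ^ p + (p - 1) := by
  have h := one_add_mul_self_le_rpow_one_add (s := t - 1) (by linarith) hp.le
  have e : (1 : ℝ) + (t - 1) = t := by ring
  rw [e] at h
  nlinarith

section scalar
variable {p D : ℝ} (hp : 1 < p) (hD : 0 < D)
include hp hD

lemma aux_facts :
    0 < (D / p) ^ (1 / (p - 1)) ∧
    ((D / p) ^ (1 / (p - 1))) ^ p = (p - 1) / p ^ (p / (p - 1)) * D ^ (p / (p - 1)) / (p - 1) ∧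
    p * ((D / p) ^ (1 / (p - 1))) ^ p = ((D / p) ^ (1 / (p - 1))) * D := by
  have hp0 : (0:ℝ) < p := by linarith
  have hp1 : (0:ℝ) < p - 1 := by linarith
  have hDp : (0:ℝ) < D / p := by positivity
  set A := (D / p) ^ (1 / (p - 1)) with hA
  have hA0 : 0 < A := rpow_pos_of_pos hDp _
  have hAp : A ^ p = (D / p) ^ (p / (p - 1)) := by
    rw [hA, ← rpow_mul hDp.le]; congr 1; field_simp
  have hsplit : p / (p - 1) = 1 + 1 / (p - 1) := by field_simp; ring
  have h2 : A ^ p = (D / p) * A := by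
    rw [hAp, hsplit, rpow_one_add' hDp.le (by rw [← hsplit]; positivity)]
  refine ⟨hA0, ?_, ?_⟩
  · rw [hAp, div_rpow hD.le hp0.le]; field_simp
  · rw [h2]; field_simp

lemma legUB' {s : ℝ} (hs : 0 ≤ s) :
    s * D - s ^ p ≤ (p - 1) / p ^ (p / (p - 1)) * D ^ (p / (p - 1)) := by
  have hp1 : (0:ℝ) < p - 1 := by linarith
  obtain ⟨hA0, hApv, hkey⟩ := aux_facts hp hD
  set A := (D / p) ^ (1 / (p - 1))
  set t := s / A with ht
  have ht0 : 0 ≤ t := by positivity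
  have hst : s = t * A := by rw [ht, div_mul_cancel₀ _ hA0.ne']
  have hsp : s ^ p = t ^ p * A ^ p := by rw [hst, mul_rpow ht0 hA0.le]
  have hb := core hp ht0
  have hAp0 : 0 < A ^ p := rpow_pos_of_pos hA0 _
  have hRA : (p - 1) / p ^ (p / (p - 1)) * D ^ (p / (p - 1)) = (p - 1) * A ^ p := by
    rw [hApv]; field_simp
  rw [hRA]
  calc s * D - s ^ p = t * (A * D) - t ^ p * A ^ p := by rw [hsp]; nth_rewrite 1 [hst]; ring
    _ = (p * t) * A ^ p - t ^ p * A ^ p := by rw [← hkey]; ring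
    _ ≤ (t ^ p + (p - 1)) * A ^ p - t ^ p * A ^ p := by
        nlinarith [mul_le_mul_of_nonneg_right hb hAp0.le]
    _ = (p - 1) * A ^ p := by ring

lemma legEQ :
    ((D / p) ^ (1 / (p - 1))) * D - ((D / p) ^ (1 / (p - 1))) ^ p
      = (p - 1) / p ^ (p / (p - 1)) * D ^ (p / (p - 1)) := by
  have hp1 : (0:ℝ) < p - 1 := by linarith
  obtain ⟨hA0, hApv, hkey⟩ := aux_facts hp hD
  set A := (D / p) ^ (1 / (p - 1))
  have hRA : (p - 1) / p ^ (p / (p - 1)) * D ^ (p / (p - 1)) = (p - 1) * A ^ p := by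
    rw [hApv]; field_simp
  rw [hRA]; nlinarith

lemma polUB' {s : ℝ} (hs : 0 < s) :
    (s * D - 1) / s ^ p ≤ (p - 1) ^ (p - 1) / p ^ p * D ^ p := by
  have hp1 : (0:ℝ) < p - 1 := by linarith
  have hp0 : (0:ℝ) < p := by linarith
  have hsp : 0 < s ^ p := rpow_pos_of_pos hs _
  rw [div_le_iff₀ hsp]
  set u := s * D * (p - 1) / p with hu
  have hu0 : 0 < u := by positivity
  have hsD : s * D = u * p / (p - 1) := by rw [hu]; field_simp
  have hup : u ^ p = s ^ p * D ^ p * (p - 1) ^ p / p ^ p := by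
    rw [hu, div_rpow (by positivity) hp0.le, mul_rpow (by positivity) hp1.le,
        mul_rpow hs.le hD.le]
  have hb := core hp hu0.le
  have hRHS : (p - 1) ^ (p - 1) / p ^ p * D ^ p * s ^ p = u ^ p / (p - 1) := by
    rw [hup]
    have : (p-1) ^ p = (p-1) * (p-1) ^ (p-1) := by
      rw [← rpow_one_add' hp1.le (by positivity : (1:ℝ) + (p-1) ≠ 0)]; congr 1; ring
    rw [this]
    have hpp : (0:ℝ) < p ^ p := rpow_pos_of_pos hp0 _
    field_simp
  rw [hRHS, hsD]
  have h4 : u * p - (p - 1) ≤ u ^ p := by nlinarith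
  calc u * p / (p - 1) - 1 = (u * p - (p - 1)) / (p - 1) := by field_simp
    _ ≤ u ^ p / (p - 1) := by gcongr

lemma polEQ :
    ((p / ((p - 1) * D)) * D - 1) / (p / ((p - 1) * D)) ^ p
      = (p - 1) ^ (p - 1) / p ^ p * D ^ p := by
  have hp1 : (0:ℝ) < p - 1 := by linarith
  have hp0 : (0:ℝ) < p := by linarith
  set s := p / ((p - 1) * D) with hs
  have hs0 : 0 < s := by positivity
  have hsp : 0 < s ^ p := rpow_pos_of_pos hs0 _
  rw [div_eq_iff hsp.ne']
  set u := s * D * (p - 1) / p with hu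
  have hu1 : u = 1 := by rw [hu, hs]; field_simp
  have hsD : s * D = p / (p - 1) := by rw [hs]; field_simp
  have hup : u ^ p = s ^ p * D ^ p * (p - 1) ^ p / p ^ p := by
    rw [hu, div_rpow (by positivity) hp0.le, mul_rpow (by positivity) hp1.le,
        mul_rpow hs0.le hD.le]
  have hRHS : (p - 1) ^ (p - 1) / p ^ p * D ^ p * s ^ p = u ^ p / (p - 1) := by
    rw [hup]
    have : (p-1) ^ p = (p-1) * (p-1) ^ (p-1) := by
      rw [← rpow_one_add' hp1.le (by positivity : (1:ℝ) + (p-1) ≠ 0)]; congr 1; ring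
    rw [this]
    have hpp : (0:ℝ) < p ^ p := rpow_pos_of_pos hp0 _
    field_simp
  rw [hRHS, hu1, one_rpow, hsD]
  field_simp; ring
end scalar

section part1
variable {n : ℕ} {q : ℝ} {f : Euc n → ℝ}

lemma homog_zero (hh : ∀ t : ℝ, 0 < t → ∀ x, f (t • x) = t ^ q * f x) (hq : 1 ≤ q) :
    f 0 = 0 := by
  have h := hh 2 (by norm_num) 0
  rw [smul_zero] at h
  have h2 : (1:ℝ) < 2 ^ q := by
    calc (1:ℝ) < 2 := one_lt_two
    _ = 2 ^ (1:ℝ) := (rpow_one 2).symm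
    _ ≤ 2 ^ q := rpow_le_rpow_left_iff one_lt_two |>.2 hq
  nlinarith [h, h2]

lemma null_add (hc : ConvexOn ℝ Set.univ f)
    (hh : ∀ t : ℝ, 0 < t → ∀ x, f (t • x) = t ^ q * f x)
    {x : Euc n} (hx : f x = 0) (y : Euc n) : f (x + y) ≤ f y := by
  have key : ∀ a : ℝ, a ∈ Ioo (0:ℝ) 1 → f (x + y) ≤ a ^ (1 - q) * f y := by
    rintro a ⟨ha0, ha1⟩
    have he0 : (0:ℝ) < 1 - a := by linarith
    have hcomb := hc.2 (mem_univ ((1-a)⁻¹ • x)) (mem_univ (a⁻¹ • y)) he0.le ha0.le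
      (by ring : (1 - a) + a = 1)
    rw [smul_inv_smul₀ he0.ne', smul_inv_smul₀ ha0.ne'] at hcomb
    have h1 : f ((1-a)⁻¹ • x) = 0 := by
      rw [hh _ (by positivity), hx, mul_zero]
    have h2 : f (a⁻¹ • y) = a⁻¹ ^ q * f y := hh _ (by positivity) y
    rw [h1, h2, smul_eq_mul, smul_eq_mul, mul_zero, zero_add] at hcomb
    calc f (x + y) ≤ a * (a⁻¹ ^ q * f y) := hcomb
      _ = a ^ (1 - q) * f y := by
          rw [inv_rpow ha0.le, rpow_sub ha0, rpow_one]
          field_simp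
  have hne : (𝓝[Ioo (0:ℝ) 1] 1).NeBot := right_nhdsWithin_Ioo_neBot one_pos
  have hts : Filter.Tendsto (fun a : ℝ => a ^ (1 - q) * f y) (𝓝[Ioo (0:ℝ) 1] 1)
      (nhds (f y)) := by
    have hcont : ContinuousAt (fun a : ℝ => a ^ (1 - q) * f y) 1 := by
      exact ((continuousAt_rpow_const 1 (1-q) (Or.inl one_ne_zero))).mul continuousAt_const
    have := hcont.continuousWithinAt (s := Ioo (0:ℝ) 1)
    simpa [ContinuousWithinAt, one_rpow] using this
  exact ge_of_tendsto hts (Filter.eventually_of_mem self_mem_nhdsWithin key)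

lemma root_convex (hq : 1 ≤ q) (h0 : ∀ x, 0 ≤ f x)
    (hh : ∀ t : ℝ, 0 < t → ∀ x, f (t • x) = t ^ q * f x)
    (hc : ConvexOn ℝ Set.univ f) :
    ConvexOn ℝ Set.univ (fun x => f x ^ (1 / q)) := by
  have hq0 : (0:ℝ) < q := by linarith
  set g : Euc n → ℝ := fun x => f x ^ (1 / q) with hg
  have hg0 : ∀ x, 0 ≤ g x := fun x => rpow_nonneg (h0 x) _
  have hgz : ∀ x, f x = 0 → g x = 0 := fun x hx => by
    simp only [hg, hx, zero_rpow (by positivity : (1:ℝ)/q ≠ 0)]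
  have hfg : ∀ x, f x = g x ^ q := fun x => by
    rw [hg, ← rpow_mul (h0 x), one_div, inv_mul_cancel₀ hq0.ne', rpow_one]
  have hgh : ∀ t : ℝ, 0 < t → ∀ x, g (t • x) = t * g x := by
    intro t ht x
    simp only [hg, hh t ht x, mul_rpow (by positivity : (0:ℝ) ≤ t ^ q) (h0 x),
      ← rpow_mul ht.le, mul_one_div, div_self hq0.ne', rpow_one]
  have hsub : ∀ u v : Euc n, g (u + v) ≤ g u + g v := by
    intro u v
    rcases eq_or_lt_of_le (h0 u) with hu | hu
    · have := null_add hc hh hu.symm v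
      have h2 : g (u + v) ≤ g v := by
        simp only [hg]; exact rpow_le_rpow (h0 _) this (by positivity)
      have := hgz u hu.symm
      linarith
    rcases eq_or_lt_of_le (h0 v) with hv | hv
    · rw [add_comm]
      have := null_add hc hh hv.symm u
      have h2 : g (v + u) ≤ g u := by
        simp only [hg]; exact rpow_le_rpow (h0 _) this (by positivity)
      have := hgz v hv.symm
      linarith
    · set a := g u with ha
      set b := g v with hb
      have ha0 : 0 < a := by
        rcases (hg0 u).lt_or_eq with h | h; · exact h
        · exfalso; rw [hfg u, ← h, zero_rpow hq0.ne'] at hu; exact lt_irrefl 0 hu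
      have hb0 : 0 < b := by
        rcases (hg0 v).lt_or_eq with h | h; · exact h
        · exfalso; rw [hfg v, ← h, zero_rpow hq0.ne'] at hv; exact lt_irrefl 0 hv
      have hab : 0 < a + b := by linarith
      have hcomb := hc.2 (mem_univ (a⁻¹ • u)) (mem_univ (b⁻¹ • v))
        (by positivity : (0:ℝ) ≤ a/(a+b)) (by positivity : (0:ℝ) ≤ b/(a+b))
        (by field_simp)
      have hptr : (a/(a+b)) • (a⁻¹ • u) + (b/(a+b)) • (b⁻¹ • v) = (a+b)⁻¹ • (u + v) := by
        rw [smul_smul, smul_smul, smul_add]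
        congr 1 <;> congr 1 <;> (field_simp)
      rw [hptr] at hcomb
      have hfu : f (a⁻¹ • u) = 1 := by
        rw [hh _ (by positivity), hfg u, inv_rpow ha0.le, inv_mul_cancel₀ (by positivity)]
      have hfv : f (b⁻¹ • v) = 1 := by
        rw [hh _ (by positivity), hfg v, inv_rpow hb0.le, inv_mul_cancel₀ (by positivity)]
      rw [hfu, hfv, smul_eq_mul, smul_eq_mul, mul_one, mul_one] at hcomb
      have hc1 : f ((a+b)⁻¹ • (u+v)) ≤ 1 := by
        have hone : a/(a+b) + b/(a+b) = 1 := by field_simp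
        exact hcomb.trans_eq hone
      have hgc : g ((a+b)⁻¹ • (u+v)) ≤ 1 := by
        rw [hg]
        calc f ((a+b)⁻¹ • (u+v)) ^ (1/q) ≤ 1 ^ (1/q) :=
          rpow_le_rpow (h0 _) hc1 (by positivity)
        _ = 1 := one_rpow _
      have := hgh (a+b) hab ((a+b)⁻¹ • (u+v))
      rw [smul_inv_smul₀ hab.ne'] at this
      calc g (u + v) = (a+b) * g ((a+b)⁻¹ • (u+v)) := this
        _ ≤ (a+b) * 1 := by nlinarith
        _ = a + b := mul_one _
  refine ⟨convex_univ, ?_⟩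
  intro u _ v _ s t hs ht hst
  rcases eq_or_lt_of_le hs with hs0 | hs0
  · rw [← hs0, zero_smul, zero_add, zero_smul, zero_add]
    have ht1 : t = 1 := by linarith
    rw [ht1, one_smul, one_smul]
  rcases eq_or_lt_of_le ht with ht0 | ht0
  · rw [← ht0, zero_smul, add_zero, zero_smul, add_zero]
    have hs1 : s = 1 := by linarith
    rw [hs1, one_smul, one_smul]
  calc g (s • u + t • v) ≤ g (s • u) + g (t • v) := hsub _ _
    _ = s * g u + t * g v := by rw [hgh s hs0 u, hgh t ht0 v]
    _ = s • g u + t • g v := rfl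

lemma pow_convex_of_convex {s : ℝ} (hs : 1 ≤ s) {g : Euc n → ℝ} (h0 : ∀ x, 0 ≤ g x)
    (hc : ConvexOn ℝ Set.univ g) : ConvexOn ℝ Set.univ (fun x => g x ^ s) := by
  refine ⟨convex_univ, ?_⟩
  intro u _ v _ a b ha hb hab
  have h1 : g (a • u + b • v) ^ s ≤ (a * g u + b * g v) ^ s :=
    rpow_le_rpow (h0 _) (hc.2 (mem_univ u) (mem_univ v) ha hb hab) (by linarith)
  have h2 := (convexOn_rpow hs).2 (mem_Ici.2 (h0 u)) (mem_Ici.2 (h0 v)) ha hb hab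
  simp only [smul_eq_mul] at *
  exact h1.trans h2

lemma pow_convex {s : ℝ} (hq : 1 ≤ q) (hs : 1 / q ≤ s) (h0 : ∀ x, 0 ≤ f x)
    (hh : ∀ t : ℝ, 0 < t → ∀ x, f (t • x) = t ^ q * f x)
    (hc : ConvexOn ℝ Set.univ f) : ConvexOn ℝ Set.univ (fun x => f x ^ s) := by
  have hq0 : (0:ℝ) < q := by linarith
  have hs0 : (0:ℝ) < s := lt_of_lt_of_le (by positivity) hs
  have hroot := root_convex hq h0 hh hc
  have h1 : 1 ≤ q * s := by
    calc (1:ℝ) = q * (1/q) := by field_simp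
    _ ≤ q * s := by gcongr
  have hres := pow_convex_of_convex h1 (fun x => rpow_nonneg (h0 x) _) hroot
  have hfun : (fun x => (f x ^ (1/q)) ^ (q*s)) = fun x => f x ^ s := funext fun x => by
    rw [← rpow_mul (h0 x)]; congr 1; field_simp
  rwa [hfun] at hres
end part1
end Stmt14Aux

open Real Filter Stmt14Aux
open scoped Topology

/-- convexity of powers of homogeneous functions, and formulas expressing
`ℒf` and `𝒜f` through the norm-like dual of `f^(1/p)`. -/
theorem stmt_14 {n : ℕ} (p r : ℝ) (hp : 1 ≤ p) (hr : 1 / p ≤ r) (f : Euc n → ℝ)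
    (hf0 : ∀ x, 0 ≤ f x)
    (hfh : ∀ t : ℝ, 0 < t → ∀ x, f (t • x) = t ^ p * f x) :
    (ConvexOn ℝ Set.univ f ↔ ConvexOn ℝ Set.univ (fun x => f x ^ r)) ∧
    (1 < p → CHplus n p f → ∀ pstar : ℝ, pstar = p / (p - 1) →
      (Leg f = fun x => ((p - 1) / p ^ pstar) * (NormDual (fun y => f y ^ (1 / p)) x) ^ pstar) ∧
      (Pol f = fun x => ((p - 1) ^ (p - 1) / p ^ p) * (NormDual (fun y => f y ^ (1 / p)) x) ^ p)) := by
  have hp0 : (0:ℝ) < p := by linarith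
  have hr0 : (0:ℝ) < r := lt_of_lt_of_le (by positivity) hr
  constructor
  · -- part 1
    constructor
    · intro hconv
      exact pow_convex hp hr hf0 hfh hconv
    · intro hconv
      set F : Euc n → ℝ := fun x => f x ^ r with hF
      have hF0 : ∀ x, 0 ≤ F x := fun x => rpow_nonneg (hf0 x) _
      have hFh : ∀ t : ℝ, 0 < t → ∀ x, F (t • x) = t ^ (p * r) * F x := by
        intro t ht x
        simp only [hF, hfh t ht x, mul_rpow (by positivity : (0:ℝ) ≤ t ^ p) (hf0 x),
          ← rpow_mul ht.le]
      have hpr : 1 ≤ p * r := by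
        calc (1:ℝ) = p * (1/p) := by field_simp
        _ ≤ p * r := by gcongr
      have hrr : 1 / (p * r) ≤ 1 / r := by
        apply one_div_le_one_div_of_le hr0
        nlinarith
      have hres := pow_convex hpr hrr hF0 hFh hconv
      have hfun : (fun x => F x ^ (1/r)) = f := funext fun x => by
        simp only [hF]
        rw [← rpow_mul (hf0 x), mul_one_div, div_self hr0.ne', rpow_one]
      rwa [hfun] at hres
  · -- part 2
    intro hp1 hch pstar hpstar
    have hp1' : (0:ℝ) < p - 1 := by linarith
    obtain ⟨hconv, -, -, K, hK⟩ := hch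
    set g : Euc n → ℝ := fun y => f y ^ (1 / p) with hgdef
    have hg0 : ∀ y, 0 ≤ g y := fun y => rpow_nonneg (hf0 y) _
    have hgzf : ∀ y, (g y = 0 ↔ f y = 0) := fun y =>
      rpow_eq_zero (hf0 y) (by positivity)
    have hfg : ∀ y, f y = g y ^ p := fun y => by
      simp only [hgdef]
      rw [← rpow_mul (hf0 y), one_div, inv_mul_cancel₀ hp0.ne', rpow_one]
    have hgh : ∀ t : ℝ, 0 < t → ∀ y, g (t • y) = t * g y := by
      intro t ht y
      simp only [hgdef, hfh t ht y, mul_rpow (by positivity : (0:ℝ) ≤ t ^ p) (hf0 y),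
        ← rpow_mul ht.le, mul_one_div, div_self hp0.ne', rpow_one]
    have hf00 : f 0 = 0 := homog_zero hfh hp
    have hgzero : g 0 = 0 := by
      simp only [hgdef, hf00]; exact zero_rpow (by positivity)
    have hmemK : ∀ z, z ∈ K ↔ f z = 0 := fun z => by
      simpa using Set.ext_iff.mp hK z
    have hcond : ∀ y : Euc n, (∀ z, f z = 0 → ⟪y, z⟫ = 0) ↔ y ∈ Kᗮ := by
      intro y
      rw [Submodule.mem_orthogonal']
      constructor
      · intro h u hu; exact h u ((hmemK u).1 hu)
      · intro h z hz; exact h z ((hmemK z).2 hz)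
    have hcondg : ∀ y : Euc n, (∀ z, g z = 0 → ⟪y, z⟫ = 0) ↔ y ∈ Kᗮ := by
      intro y
      rw [← hcond y]
      constructor
      · intro h z hz; exact h z ((hgzf z).2 hz)
      · intro h z hz; exact h z ((hgzf z).1 hz)
    have hgconv : ConvexOn ℝ Set.univ g := root_convex hp hf0 hfh hconv
    have hgcont : Continuous g := by
      have h1 : ContinuousOn g Set.univ := hgconv.continuousOn isOpen_univ
      exact continuousOn_univ.mp h1
    -- coercivity on Kᗮ
    have hcoer : ∃ m : ℝ, 0 < m ∧ ∀ y ∈ Kᗮ, m * ‖y‖ ≤ g y := by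
      by_cases hKt : ∀ y ∈ Kᗮ, y = (0 : Euc n)
      · exact ⟨1, one_pos, fun y hy => by rw [hKt y hy, hgzero, norm_zero, mul_zero]⟩
      · push_neg at hKt
        obtain ⟨y₁, hy₁K, hy₁0⟩ := hKt
        set S := Metric.sphere (0 : Euc n) 1 ∩ (Kᗮ : Set (Euc n)) with hS
        have hy₁n : (0:ℝ) < ‖y₁‖ := norm_pos_iff.2 hy₁0
        have hSne : S.Nonempty := by
          refine ⟨‖y₁‖⁻¹ • y₁, ?_, Kᗮ.smul_mem _ hy₁K⟩
          rw [mem_sphere_zero_iff_norm, norm_smul, norm_inv, norm_norm,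
            inv_mul_cancel₀ hy₁n.ne']
        have hScomp : IsCompact S :=
          (isCompact_sphere 0 1).inter_right (Submodule.closed_of_finiteDimensional Kᗮ)
        obtain ⟨w, hwS, hwmin⟩ := hScomp.exists_isMinOn hSne hgcont.continuousOn
        have hw0 : 0 < g w := by
          rcases (hg0 w).lt_or_eq with h | h
          · exact h
          · exfalso
            have hfw : f w = 0 := (hgzf w).1 h.symm
            have hwK : w ∈ K := (hmemK w).2 hfw
            have hw00 : w = 0 := by
              have h3 := (Submodule.mem_orthogonal K w).mp hwS.2 w hwK
              exact inner_self_eq_zero.mp h3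
            have := hwS.1
            rw [hw00, mem_sphere_zero_iff_norm, norm_zero] at this
            norm_num at this
        refine ⟨g w, hw0, ?_⟩
        intro y hy
        rcases eq_or_ne y 0 with rfl | hy0
        · rw [hgzero, norm_zero, mul_zero]
        · have hyn : (0:ℝ) < ‖y‖ := norm_pos_iff.2 hy0
          have hunit : ‖y‖⁻¹ • y ∈ S := by
            refine ⟨?_, Kᗮ.smul_mem _ hy⟩
            rw [mem_sphere_zero_iff_norm, norm_smul, norm_inv, norm_norm,
              inv_mul_cancel₀ hyn.ne']
          have h1 : g w ≤ g (‖y‖⁻¹ • y) := isMinOn_iff.mp hwmin _ hunit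
          rw [hgh _ (by positivity) y] at h1
          have h2 := mul_le_mul_of_nonneg_right h1 hyn.le
          calc g w * ‖y‖ ≤ ‖y‖⁻¹ * g y * ‖y‖ := h2
            _ = g y := by field_simp
    obtain ⟨m, hm0, hmle⟩ := hcoer
    have key : ∀ x : Euc n,
        Leg f x = ((p - 1) / p ^ pstar) * (NormDual g x) ^ pstar ∧
        Pol f x = ((p - 1) ^ (p - 1) / p ^ p) * (NormDual g x) ^ p := by
      intro x
      set C : Set (Euc n) := {y : Euc n | y ∈ Kᗮ ∧ g y ≤ 1} with hCdef
      have hCclosed : IsClosed C := by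
        have hCeq : C = (Kᗮ : Set (Euc n)) ∩ g ⁻¹' (Iic 1) := rfl
        rw [hCeq]
        exact (Submodule.closed_of_finiteDimensional _).inter (isClosed_Iic.preimage hgcont)
      have hCsub : C ⊆ Metric.closedBall 0 m⁻¹ := by
        rintro y ⟨hyK, hy1⟩
        rw [Metric.mem_closedBall, dist_zero_right]
        have h1 := hmle y hyK
        have hminv : m * m⁻¹ = 1 := mul_inv_cancel₀ hm0.ne'
        nlinarith [norm_nonneg y]
      have hCcomp : IsCompact C :=
        IsCompact.of_isClosed_subset (isCompact_closedBall 0 m⁻¹) hCclosed hCsub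
      have h0C : (0:Euc n) ∈ C := ⟨Submodule.zero_mem _, by rw [hgzero]; norm_num⟩
      have hinncont : Continuous (fun y : Euc n => ⟪y, x⟫) :=
        continuous_id.inner continuous_const
      obtain ⟨y₀, hy₀C, hymax⟩ := hCcomp.exists_isMaxOn ⟨0, h0C⟩ hinncont.continuousOn
      set D := ⟪y₀, x⟫ with hDdef
      have hmax' : ∀ y ∈ C, ⟪y, x⟫ ≤ D := fun y hy => isMaxOn_iff.mp hymax y hy
      have hD0 : 0 ≤ D := by
        have h1 := hmax' 0 h0C
        rwa [inner_zero_left] at h1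
      have hND : NormDual g x = D := by
        apply IsGreatest.csSup_eq
        constructor
        · exact ⟨y₀, hy₀C.2, (hcondg y₀).2 hy₀C.1, rfl⟩
        · rintro _ ⟨y, hy1, hyc, rfl⟩
          exact hmax' y ⟨(hcondg y).1 hyc, hy1⟩
      have K1 : ∀ y ∈ Kᗮ, ⟪x, y⟫ ≤ g y * D := by
        intro y hy
        rcases eq_or_lt_of_le (hg0 y) with h0 | hpos
        · have hfy : f y = 0 := (hgzf y).1 h0.symm
          have hyK : y ∈ K := (hmemK y).2 hfy
          have hy00 : y = 0 := by
            have h3 := (Submodule.mem_orthogonal K y).mp hy y hyK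
            exact inner_self_eq_zero.mp h3
          rw [hy00, inner_zero_right, hgzero, zero_mul]
        · have hu : (g y)⁻¹ • y ∈ C := by
            refine ⟨Kᗮ.smul_mem _ hy, ?_⟩
            rw [hgh _ (by positivity) y, inv_mul_cancel₀ hpos.ne']
          have h4 := hmax' _ hu
          rw [real_inner_smul_left] at h4
          have h5 := mul_le_mul_of_nonneg_left h4 hpos.le
          rw [real_inner_comm]
          calc ⟪y, x⟫ = g y * ((g y)⁻¹ * ⟪y, x⟫) := by field_simp
            _ ≤ g y * D := h5
      rw [hND]
      constructor
      · -- Legendre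
        show sSup {r : ℝ | ∃ y : Euc n, (∀ z, f z = 0 → ⟪y, z⟫ = 0) ∧ r = ⟪x, y⟫ - f y} = _
        rcases eq_or_lt_of_le hD0 with hD | hD
        · rw [← hD, zero_rpow (by rw [hpstar]; positivity), mul_zero]
          apply IsGreatest.csSup_eq
          constructor
          · exact ⟨0, fun z _ => inner_zero_left z, by rw [inner_zero_right, hf00, sub_zero]⟩
          · rintro _ ⟨y, hyc, rfl⟩
            have hyK := (hcond y).1 hyc
            have h1 := K1 y hyK
            rw [← hD, mul_zero] at h1
            have := hf0 y
            linarith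
        · have hgy₀ : g y₀ = 1 := by
            have h6 := K1 y₀ hy₀C.1
            rw [real_inner_comm, ← hDdef] at h6
            have h7 : 1 ≤ g y₀ := by nlinarith
            exact le_antisymm hy₀C.2 h7
          have hfy₀ : f y₀ = 1 := by rw [hfg y₀, hgy₀, one_rpow]
          set s := (D / p) ^ (1 / (p - 1)) with hsdef
          have hs0 : 0 < s := rpow_pos_of_pos (by positivity) _
          rw [hpstar]
          apply IsGreatest.csSup_eq
          constructor
          · refine ⟨s • y₀, (hcond _).2 (Kᗮ.smul_mem _ hy₀C.1), ?_⟩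
            rw [real_inner_smul_right, hfh s hs0 y₀, hfy₀, mul_one,
              real_inner_comm, ← hDdef]
            exact (legEQ hp1 hD).symm
          · rintro _ ⟨y, hyc, rfl⟩
            have hyK := (hcond y).1 hyc
            calc ⟪x, y⟫ - f y ≤ g y * D - g y ^ p := by
                  have h1 := K1 y hyK
                  rw [hfg y]; linarith
              _ ≤ _ := legUB' hp1 hD (hg0 y)
      · -- Polarity
        show sSup {r : ℝ | ∃ y : Euc n, (∀ z, f z = 0 → ⟪y, z⟫ = 0) ∧ 0 < f y ∧
          r = (⟪x, y⟫ - 1) / f y} = _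
        rcases eq_or_lt_of_le hD0 with hD | hD
        · -- D = 0
          rw [← hD, zero_rpow hp0.ne', mul_zero]
          have hub : ∀ r' ∈ {r : ℝ | ∃ y : Euc n, (∀ z, f z = 0 → ⟪y, z⟫ = 0) ∧ 0 < f y ∧
              r = (⟪x, y⟫ - 1) / f y}, r' ≤ 0 := by
            rintro _ ⟨y, hyc, hfy, rfl⟩
            have hyK := (hcond y).1 hyc
            have h1 := K1 y hyK
            rw [← hD, mul_zero] at h1
            apply div_nonpos_of_nonpos_of_nonneg (by linarith) hfy.le
          by_cases hex : ∃ u, u ∈ Kᗮ ∧ 0 < f u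
          · obtain ⟨u, huK, hfu⟩ := hex
            have hcx : ⟪x, u⟫ ≤ 0 := by
              have h1 := K1 u huK
              rw [← hD, mul_zero] at h1
              exact h1
            have hbdd : BddAbove {r : ℝ | ∃ y : Euc n, (∀ z, f z = 0 → ⟪y, z⟫ = 0) ∧
                0 < f y ∧ r = (⟪x, y⟫ - 1) / f y} := ⟨0, hub⟩
            have hmem : ∀ t : ℝ, 0 < t →
                (t * ⟪x, u⟫ - 1) / (t ^ p * f u) ∈ {r : ℝ | ∃ y : Euc n,
                (∀ z, f z = 0 → ⟪y, z⟫ = 0) ∧ 0 < f y ∧ r = (⟪x, y⟫ - 1) / f y} := by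
              intro t ht
              refine ⟨t • u, (hcond _).2 (Kᗮ.smul_mem _ huK), ?_, ?_⟩
              · rw [hfh t ht u]; positivity
              · rw [real_inner_smul_right, hfh t ht u]
            have h1 : Tendsto (fun t : ℝ => t ^ (1 - p)) atTop (𝓝 0) := by
              simpa [neg_sub] using tendsto_rpow_neg_atTop hp1'
            have h2 : Tendsto (fun t : ℝ => t ^ (-p)) atTop (𝓝 0) :=
              tendsto_rpow_neg_atTop hp0
            have htend0 : Tendsto (fun t : ℝ =>
                (⟪x, u⟫ * t ^ (1 - p) - t ^ (-p)) / f u) atTop (𝓝 0) := by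
              have h3 := ((h1.const_mul ⟪x, u⟫).sub h2).div_const (f u)
              simpa using h3
            have htend : Tendsto (fun t : ℝ =>
                (t * ⟪x, u⟫ - 1) / (t ^ p * f u)) atTop (𝓝 0) := by
              apply htend0.congr'
              filter_upwards [eventually_ge_atTop (1:ℝ)] with t ht
              have ht0 : (0:ℝ) < t := by linarith
              have htp : (0:ℝ) < t ^ p := rpow_pos_of_pos ht0 _
              rw [rpow_sub ht0, rpow_one, rpow_neg ht0.le]
              field_simp
            have hge : (0:ℝ) ≤ sSup {r : ℝ | ∃ y : Euc n,
                (∀ z, f z = 0 → ⟪y, z⟫ = 0) ∧ 0 < f y ∧ r = (⟪x, y⟫ - 1) / f y} := by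
              apply le_of_tendsto htend
              filter_upwards [eventually_gt_atTop (0:ℝ)] with t ht
              exact le_csSup hbdd (hmem t ht)
            have hle : sSup {r : ℝ | ∃ y : Euc n,
                (∀ z, f z = 0 → ⟪y, z⟫ = 0) ∧ 0 < f y ∧ r = (⟪x, y⟫ - 1) / f y} ≤ 0 :=
              csSup_le ⟨_, hmem 1 one_pos⟩ hub
            linarith [hge, hle, le_antisymm hle hge]
          · have hempty : {r : ℝ | ∃ y : Euc n, (∀ z, f z = 0 → ⟪y, z⟫ = 0) ∧ 0 < f y ∧
                r = (⟪x, y⟫ - 1) / f y} = (∅ : Set ℝ) := by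
              rw [Set.eq_empty_iff_forall_notMem]
              rintro _ ⟨y, hyc, hfy, rfl⟩
              exact hex ⟨y, (hcond y).1 hyc, hfy⟩
            rw [hempty, Real.sSup_empty]
        · -- D > 0
          have hgy₀ : g y₀ = 1 := by
            have h6 := K1 y₀ hy₀C.1
            rw [real_inner_comm, ← hDdef] at h6
            have h7 : 1 ≤ g y₀ := by nlinarith
            exact le_antisymm hy₀C.2 h7
          have hfy₀ : f y₀ = 1 := by rw [hfg y₀, hgy₀, one_rpow]
          set s := p / ((p - 1) * D) with hsdef
          have hs0 : 0 < s := by positivity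
          apply IsGreatest.csSup_eq
          constructor
          · refine ⟨s • y₀, (hcond _).2 (Kᗮ.smul_mem _ hy₀C.1), ?_, ?_⟩
            · rw [hfh s hs0 y₀, hfy₀, mul_one]
              exact rpow_pos_of_pos hs0 _
            · rw [real_inner_smul_right, hfh s hs0 y₀, hfy₀, mul_one,
                real_inner_comm, ← hDdef]
              exact (polEQ hp1 hD).symm
          · rintro _ ⟨y, hyc, hfy, rfl⟩
            have hyK := (hcond y).1 hyc
            have hgy : 0 < g y := by
              rcases eq_or_lt_of_le (hg0 y) with h0 | hpos
              · exfalso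
                rw [hfg y, ← h0, zero_rpow hp0.ne'] at hfy
                exact lt_irrefl 0 hfy
              · exact hpos
            have h8 : ⟪x, y⟫ - 1 ≤ g y * D - 1 := by
              have := K1 y hyK; linarith
            calc (⟪x, y⟫ - 1) / f y = (⟪x, y⟫ - 1) / (g y ^ p) := by rw [hfg y]
              _ ≤ (g y * D - 1) / (g y ^ p) := by
                  have hgp : (0:ℝ) < g y ^ p := rpow_pos_of_pos hgy _
                  gcongr
              _ ≤ _ := polUB' hp1 hD hgy
    exact ⟨funext fun x => (key x).1, funext fun x => (key x).2⟩

end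
end

section
/- Let p, q ≥ 1, f ∈ CH⁺_p(ℝⁿ), and g ∈ CH⁺_q(ℝⁿ). For every λ ≥ 0 and every t > 0, x ∈ S_λ(f, g) if and only if t·x ∈ S_{t^{p−q}·λ}(f, g). Moreover, if p ≠ q, f and g are even, and (f, g) has a nonzero eigenvalue, then the function λ ↦ mult_{f,g}(λ) is constant on (0, +∞). -/
open Set
open scoped RealInnerProductSpace

noncomputable section

lemma subdiff_smul_aux {n : ℕ} {p : ℝ} {f : Euc n → ℝ}
    (hf : ∀ t : ℝ, 0 < t → ∀ x, f (t • x) = t ^ p * f x)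
    {t : ℝ} (ht : 0 < t) {x w : Euc n} (hw : w ∈ subdiff f x) :
    (t ^ (p - 1)) • w ∈ subdiff f (t • x) := by
  intro y
  have ht' : t ≠ 0 := ht.ne'
  have hrw : y - t • x = t • (t⁻¹ • y - x) := by
    rw [smul_sub, smul_smul, mul_inv_cancel₀ ht', one_smul]
  have h1 : ⟪(t ^ (p - 1)) • w, y - t • x⟫ = t ^ (p - 1) * (t * ⟪w, t⁻¹ • y - x⟫) := by
    rw [real_inner_smul_left, hrw, real_inner_smul_right]
  have hpow : t ^ (p - 1) * t = t ^ p := by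
    nth_rewrite 2 [(Real.rpow_one t).symm]
    rw [← Real.rpow_add ht]; ring_nf
  have h2 : ⟪w, t⁻¹ • y - x⟫ ≤ f (t⁻¹ • y) - f x := hw _
  have hy : f y = t ^ p * f (t⁻¹ • y) := by
    have := hf t ht (t⁻¹ • y)
    rwa [smul_smul, mul_inv_cancel₀ ht', one_smul] at this
  have htp : 0 < t ^ p := Real.rpow_pos_of_pos ht p
  calc ⟪(t ^ (p - 1)) • w, y - t • x⟫
      = t ^ p * ⟪w, t⁻¹ • y - x⟫ := by rw [h1, ← mul_assoc, hpow]
    _ ≤ t ^ p * (f (t⁻¹ • y) - f x) := by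
        exact mul_le_mul_of_nonneg_left h2 htp.le
    _ = f y - f (t • x) := by rw [hf t ht x, hy]; ring

lemma eig_smul_aux {n : ℕ} {p q : ℝ} {f g : Euc n → ℝ}
    (hf : ∀ t : ℝ, 0 < t → ∀ x, f (t • x) = t ^ p * f x)
    (hg : ∀ t : ℝ, 0 < t → ∀ x, g (t • x) = t ^ q * g x)
    {lam t : ℝ} (ht : 0 < t) {x : Euc n} (hx : x ∈ eigSpace f g lam) :
    t • x ∈ eigSpace f g (t ^ (p - q) * lam) := by
  obtain ⟨w, hw, hfw⟩ := hx
  refine ⟨(t ^ (q - 1)) • w, subdiff_smul_aux hg ht hw, ?_⟩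
  have key : (t ^ (p - q) * lam) • (t ^ (q - 1)) • w = (t ^ (p - 1)) • (lam • w) := by
    rw [smul_smul, smul_smul]
    congr 1
    have e : t ^ (p - q) * t ^ (q - 1) = t ^ (p - 1) := by
      rw [← Real.rpow_add ht]; ring_nf
    calc t ^ (p - q) * lam * t ^ (q - 1) = (t ^ (p - q) * t ^ (q - 1)) * lam := by ring
      _ = t ^ (p - 1) * lam := by rw [e]
  rw [key]
  exact subdiff_smul_aux hf ht hfw

lemma genus_le_of_map {n : ℕ} {S T : Set (Euc n)} (c : ℝ)
    (h : ∀ x ∈ T, c • x ∈ S) : genus T ≤ genus S := by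
  apply sInf_le_sInf
  rintro k ⟨m, rfl, φ, hc, hnz, hodd⟩
  refine ⟨m, rfl, fun x => φ (c • x), ?_, ?_, ?_⟩
  · exact hc.comp (continuous_const_smul c).continuousOn h
  · exact fun x hx => hnz _ (h x hx)
  · intro x hx
    show φ (c • -x) = -φ (c • x)
    rw [smul_neg, hodd _ (h x hx)]

theorem stmt_16' {n : ℕ} (p q : ℝ)
    (f g : Euc n → ℝ) (hf : CHplus n p f) (hg : CHplus n q g) :
    (∀ lam : ℝ, ∀ t : ℝ, 0 < t → ∀ x : Euc n,
      (x ∈ eigSpace f g lam ↔ t • x ∈ eigSpace f g (t ^ (p - q) * lam))) := by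
  obtain ⟨-, -, hfh, -⟩ := hf
  obtain ⟨-, -, hgh, -⟩ := hg
  intro lam t ht x
  constructor
  · exact fun hx => eig_smul_aux hfh hgh ht hx
  · intro hx
    have ht' : (0:ℝ) < t⁻¹ := inv_pos.mpr ht
    have := eig_smul_aux hfh hgh ht' hx
    rw [smul_smul, inv_mul_cancel₀ ht.ne', one_smul] at this
    have heq : (t⁻¹) ^ (p - q) * (t ^ (p - q) * lam) = lam := by
      rw [Real.inv_rpow ht.le, ← mul_assoc,
        inv_mul_cancel₀ (Real.rpow_pos_of_pos ht _).ne']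
      ring
    rwa [heq] at this

/-- scaling behaviour of eigenspaces and constancy of multiplicities
when `p ≠ q`. -/
theorem stmt_16 {n : ℕ} (p q : ℝ) (hp : 1 ≤ p) (hq : 1 ≤ q)
    (f g : Euc n → ℝ) (hf : CHplus n p f) (hg : CHplus n q g) :
    (∀ lam : ℝ, 0 ≤ lam → ∀ t : ℝ, 0 < t → ∀ x : Euc n,
      (x ∈ eigSpace f g lam ↔ t • x ∈ eigSpace f g (t ^ (p - q) * lam))) ∧
    (p ≠ q → (∀ x, f (-x) = f x) → (∀ x, g (-x) = g x) →
      (∃ lam : ℝ, lam ≠ 0 ∧ IsEigenvalue f g lam) →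
      ∀ lam₁ lam₂ : ℝ, 0 < lam₁ → 0 < lam₂ →
        mult f g lam₁ = mult f g lam₂) := by
  have main := stmt_16' p q f g hf hg
  refine ⟨fun lam _ t ht x => main lam t ht x, ?_⟩
  intro hpq _ _ _ lam₁ lam₂ h₁ h₂
  have hpq' : p - q ≠ 0 := sub_ne_zero.mpr hpq
  -- choose scaling factor t with t ^ (p - q) * lam₁ = lam₂
  set r : ℝ := lam₂ / lam₁ with hr
  have hrpos : 0 < r := div_pos h₂ h₁
  set t : ℝ := r ^ ((p - q)⁻¹) with htdef
  have ht : 0 < t := Real.rpow_pos_of_pos hrpos _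
  have htpq : t ^ (p - q) = r := by
    rw [htdef, ← Real.rpow_mul hrpos.le, inv_mul_cancel₀ hpq', Real.rpow_one]
  have hscale : t ^ (p - q) * lam₁ = lam₂ := by
    rw [htpq, hr, div_mul_cancel₀ _ h₁.ne']
  have hiff : ∀ x : Euc n, x ∈ eigSpace f g lam₁ ↔ t • x ∈ eigSpace f g lam₂ := by
    intro x
    have := main lam₁ t ht x
    rwa [hscale] at this
  apply le_antisymm
  · -- mult lam₁ ≤ mult lam₂ : map x ∈ S₁ ↦ t • x ∈ S₂... use c = t
    exact genus_le_of_map t (fun x hx => (hiff x).mp hx)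
  · refine genus_le_of_map t⁻¹ (fun x hx => ?_)
    have := (hiff (t⁻¹ • x)).mpr ?_
    · exact this
    · rwa [smul_smul, mul_inv_cancel₀ ht.ne', one_smul]

end
end
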